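/- arXiv:1802.01383 — 4 statements merged into one kernel-verified Lean document; each statement's English description precedes it below -/
import Mathlib

section
/- The commutator subgroup VB_3' of the virtual braid group VB_3 is not finitely generated: no finite subset of VB_3' generates VB_3' as a group. -/
/-!
Common setup: the virtual braid group `VB n` and the welded braid group `WB n`
as presented groups, together with the distinguished elements of their
commutator subgroups used in the paper
"Commutator subgroups of virtual and welded braid groups".

Generators: for `i : Fin (n-1)`, `Sum.inl i` represents σ_{i+1} and
`Sum.inr i` represents ρ_{i+1}.
-/

/-- The generating set of `VB n` (and `WB n`). -/
abbrev VBGen (n : ℕ) := (Fin (n - 1)) ⊕ (Fin (n - 1))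

/-- The free group letter σ_i, for `1 ≤ i ≤ n-1` (junk value `1` otherwise). -/
def fσ (n i : ℕ) : FreeGroup (VBGen n) :=
  if h : 1 ≤ i ∧ i - 1 < n - 1 then FreeGroup.of (Sum.inl ⟨i - 1, h.2⟩) else 1

/-- The free group letter ρ_i, for `1 ≤ i ≤ n-1` (junk value `1` otherwise). -/
def fρ (n i : ℕ) : FreeGroup (VBGen n) :=
  if h : 1 ≤ i ∧ i - 1 < n - 1 then FreeGroup.of (Sum.inr ⟨i - 1, h.2⟩) else 1

/-- The defining relators of the virtual braid group `VB n`. -/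
def vbRels (n : ℕ) : Set (FreeGroup (VBGen n)) :=
  {r | ∃ i j, 1 ≤ i ∧ i + 2 ≤ j ∧ j ≤ n - 1 ∧
      (r = fσ n i * fσ n j * (fσ n i)⁻¹ * (fσ n j)⁻¹ ∨
       r = fρ n i * fρ n j * (fρ n i)⁻¹ * (fρ n j)⁻¹ ∨
       r = fσ n i * fρ n j * (fσ n i)⁻¹ * (fρ n j)⁻¹ ∨
       r = fσ n j * fρ n i * (fσ n j)⁻¹ * (fρ n i)⁻¹)} ∪
  {r | ∃ i, 1 ≤ i ∧ i + 1 ≤ n - 1 ∧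
      (r = fσ n i * fσ n (i+1) * fσ n i * (fσ n (i+1))⁻¹ * (fσ n i)⁻¹ * (fσ n (i+1))⁻¹ ∨
       r = fρ n i * fρ n (i+1) * fρ n i * (fρ n (i+1))⁻¹ * (fρ n i)⁻¹ * (fρ n (i+1))⁻¹ ∨
       r = fρ n i * fρ n (i+1) * fσ n i * (fρ n (i+1))⁻¹ * (fρ n i)⁻¹ * (fσ n (i+1))⁻¹)} ∪
  {r | ∃ i, 1 ≤ i ∧ i ≤ n - 1 ∧ r = fρ n i * fρ n i}

/-- The virtual braid group on `n` strands. -/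
abbrev VB (n : ℕ) := PresentedGroup (vbRels n)

/-- The generator σ_i of `VB n`. -/
def vσ (n i : ℕ) : VB n := PresentedGroup.mk (vbRels n) (fσ n i)

/-- The generator ρ_i of `VB n`. -/
def vρ (n i : ℕ) : VB n := PresentedGroup.mk (vbRels n) (fρ n i)

/-- a_m = σ_1^m (ρ_1 σ_1 ρ_1 σ_1⁻¹) σ_1^{-m}. -/
def va (n : ℕ) (m : ℤ) : VB n :=
  (vσ n 1) ^ m * (vρ n 1 * vσ n 1 * vρ n 1 * (vσ n 1)⁻¹) * (vσ n 1) ^ (-m)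

/-- b_{m,ε} = σ_1^m (ρ_1^ε σ_2 ρ_1^ε σ_1⁻¹) σ_1^{-m}. -/
def vb (n : ℕ) (m : ℤ) (ε : ℕ) : VB n :=
  (vσ n 1) ^ m * ((vρ n 1) ^ ε * vσ n 2 * (vρ n 1) ^ ε * (vσ n 1)⁻¹) * (vσ n 1) ^ (-m)

/-- c_l = σ_l σ_1⁻¹. -/
def vc (n l : ℕ) : VB n := vσ n l * (vσ n 1)⁻¹

/-- f_{m,ε} = σ_1^m (ρ_1^ε ρ_2 ρ_1^{ε+1}) σ_1^{-m}; `f_m` is `vf n m 0`. -/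
def vf (n : ℕ) (m : ℤ) (ε : ℕ) : VB n :=
  (vσ n 1) ^ m * ((vρ n 1) ^ ε * vρ n 2 * (vρ n 1) ^ (ε + 1)) * (vσ n 1) ^ (-m)

/-- g_{m,l} = σ_1^m (ρ_l ρ_1) σ_1^{-m}. -/
def vg (n : ℕ) (m : ℤ) (l : ℕ) : VB n :=
  (vσ n 1) ^ m * (vρ n l * vρ n 1) * (vσ n 1) ^ (-m)

/-- The additional relators ρ_i σ_{i+1} σ_i (ρ_{i+1})⁻¹ σ_i⁻¹ σ_{i+1}⁻¹ of the
welded braid group. -/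
def wbExtraRels (n : ℕ) : Set (FreeGroup (VBGen n)) :=
  {r | ∃ i, 1 ≤ i ∧ i + 1 ≤ n - 1 ∧
      r = fρ n i * fσ n (i+1) * fσ n i * (fρ n (i+1))⁻¹ * (fσ n i)⁻¹ * (fσ n (i+1))⁻¹}

/-- The defining relators of the welded braid group `WB n`. -/
def wbRels (n : ℕ) : Set (FreeGroup (VBGen n)) := vbRels n ∪ wbExtraRels n

/-- The welded braid group on `n` strands. -/
abbrev WB (n : ℕ) := PresentedGroup (wbRels n)

/-- The generator σ_i of `WB n`. -/
def wσ (n i : ℕ) : WB n := PresentedGroup.mk (wbRels n) (fσ n i)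

/-- The generator ρ_i of `WB n`. -/
def wρ (n i : ℕ) : WB n := PresentedGroup.mk (wbRels n) (fρ n i)

/-- a_m in `WB n`. -/
def wa (n : ℕ) (m : ℤ) : WB n :=
  (wσ n 1) ^ m * (wρ n 1 * wσ n 1 * wρ n 1 * (wσ n 1)⁻¹) * (wσ n 1) ^ (-m)

/-- f_{m,ε} in `WB n`; `f_m` is `wf n m 0`. -/
def wf (n : ℕ) (m : ℤ) (ε : ℕ) : WB n :=
  (wσ n 1) ^ m * ((wρ n 1) ^ ε * wρ n 2 * (wρ n 1) ^ (ε + 1)) * (wσ n 1) ^ (-m)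

/-- c_l in `WB n`. -/
def wc (n l : ℕ) : WB n := wσ n l * (wσ n 1)⁻¹

/-- g_{m,l} in `WB n`. -/
def wg (n : ℕ) (m : ℤ) (l : ℕ) : WB n :=
  (wσ n 1) ^ m * (wρ n l * wρ n 1) * (wσ n 1) ^ (-m)

/-!
Sending `σ₁, σ₂` to the generator `t` of `ℤ` and `ρ₁, ρ₂` to the lamp `r` at the origin defines
a homomorphism from `VB₃` to the lamplighter group `ℤ/2 ≀ ℤ`. It maps `VB₃'` into the base group,
which is abelian of exponent `2`, so the image of a finitely generated `VB₃'` would be finite.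
But the image contains the commutators `[t^k, r]`, which are pairwise distinct: `[t^k, r]` is the
configuration with lamps lit at `0` and `k`.
-/

open scoped commutatorElement

theorem Subgroup.FG.map {G H : Type*} [Group G] [Group H] {K : Subgroup G} (hK : K.FG)
    (f : G →* H) : (K.map f).FG := by
  classical
  obtain ⟨S, rfl⟩ := hK
  exact ⟨S.image f, by rw [Finset.coe_image, MonoidHom.map_closure]⟩

theorem Subgroup.FG.finite_of_commute_of_isOfFinOrder {G : Type*} [Group G] {K : Subgroup G}
    (hK : K.FG) (hcomm : ∀ x ∈ K, ∀ y ∈ K, Commute x y) (htors : ∀ x ∈ K, IsOfFinOrder x) :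
    Finite K := by
  let _ : CommGroup K := { K.toGroup with mul_comm := fun x y => Subtype.ext (hcomm x x.2 y y.2) }
  have : Group.FG K := (Group.fg_iff_subgroup_fg K).2 hK
  exact CommGroup.finite_of_fg_isMulTorsion K fun x => Submonoid.isOfFinOrder_coe.1 (htors x x.2)

namespace RegularWreathProduct

variable {D Q : Type*} [Group D] [Group Q]

theorem left_mul_of_right_eq_one {a : D ≀ᵣ Q} (ha : a.right = 1) (b : D ≀ᵣ Q) :
    (a * b).left = a.left * b.left := by
  simp [ha]

theorem commute_of_mem_ker_rightHom {D : Type*} [CommGroup D] {a b : D ≀ᵣ Q}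
    (ha : a ∈ (rightHom : D ≀ᵣ Q →* Q).ker) (hb : b ∈ (rightHom : D ≀ᵣ Q →* Q).ker) :
    Commute a b := by
  rw [MonoidHom.mem_ker, rightHom_eq_right] at ha hb
  ext
  · rw [left_mul_of_right_eq_one ha, left_mul_of_right_eq_one hb, mul_comm]
  · simp [ha, hb]

theorem sq_eq_one_of_mem_ker_rightHom (hD : ∀ d : D, d ^ 2 = 1) {a : D ≀ᵣ Q}
    (ha : a ∈ (rightHom : D ≀ᵣ Q →* Q).ker) : a ^ 2 = 1 := by
  rw [MonoidHom.mem_ker, rightHom_eq_right] at ha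
  rw [sq]
  ext x
  · rw [left_mul_of_right_eq_one ha, ← sq]; exact hD _
  · simp [ha]

theorem map_commutator_le_ker_rightHom {G Q : Type*} [Group G] [CommGroup Q] (f : G →* D ≀ᵣ Q) :
    (commutator G).map f ≤ (rightHom : D ≀ᵣ Q →* Q).ker := by
  rw [Subgroup.map_le_iff_le_comap, MonoidHom.comap_ker]
  exact Abelianization.commutator_subset_ker _

end RegularWreathProduct

/-- The lamplighter group `ℤ/2 ≀ ℤ`, with `ℤ/2` written multiplicatively as `ℤˣ`. -/
abbrev Lamplighter := ℤˣ ≀ᵣ Multiplicative ℤ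

namespace Lamplighter

open RegularWreathProduct

def shift : Lamplighter := inl (Multiplicative.ofAdd 1)

def lamp : Lamplighter := ⟨Pi.mulSingle 1 (-1), 1⟩

theorem lamp_mul_self : lamp * lamp = 1 := by
  ext x <;> simp [lamp]

theorem shift_zpow (k : ℤ) : shift ^ k = inl (Multiplicative.ofAdd k) := by
  rw [shift, ← map_zpow, ← ofAdd_zsmul, smul_eq_mul, mul_one]

theorem left_commutatorElement_shift_zpow_lamp (k : ℤ) {j : ℤ} (hj : j ≠ 0) :
    ⁅shift ^ k, lamp⁆.left (Multiplicative.ofAdd j) = if k = j then -1 else 1 := by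
  simp [commutatorElement_def, shift_zpow, lamp, Pi.mulSingle_apply, hj, inv_mul_eq_one]

theorem injective_commutatorElement_shift_zpow_lamp :
    Function.Injective fun k : ℤ => ⁅shift ^ k, lamp⁆ := by
  intro a b hab
  by_contra hne
  wlog ha : a ≠ 0 generalizing a b
  · exact this hab.symm (Ne.symm hne) (by omega)
  have h := congrArg (fun g : Lamplighter => g.left (Multiplicative.ofAdd a)) hab
  simp only [left_commutatorElement_shift_zpow_lamp _ ha, if_neg (Ne.symm hne)] at h
  exact absurd h (by decide)

end Lamplighter

namespace VB3

variable {H : Type*} [Group H]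

theorem lift_fσ (f : VBGen 3 → H) {i : ℕ} (h1 : 1 ≤ i) (h2 : i ≤ 2) :
    FreeGroup.lift f (fσ 3 i) = f (Sum.inl ⟨i - 1, by omega⟩) := by
  rw [fσ, dif_pos ⟨h1, by omega⟩, FreeGroup.lift_apply_of]

theorem lift_fρ (f : VBGen 3 → H) {i : ℕ} (h1 : 1 ≤ i) (h2 : i ≤ 2) :
    FreeGroup.lift f (fρ 3 i) = f (Sum.inr ⟨i - 1, by omega⟩) := by
  rw [fρ, dif_pos ⟨h1, by omega⟩, FreeGroup.lift_apply_of]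

/- `VB 3` has no far-commutation relators, and once `σ₁, σ₂ ↦ t` and `ρ₁, ρ₂ ↦ r` the braid
relators hold trivially and the mixed one `ρ₁ρ₂σ₁ = σ₂ρ₁ρ₂` reduces to `r² = 1`. -/
theorem lift_eq_one_of_mem_vbRels {t r : H} (hr : r * r = 1) :
    ∀ w ∈ vbRels 3, FreeGroup.lift (Sum.elim (fun _ => t) (fun _ => r)) w = 1 := by
  rintro w ((⟨i, j, hi, hij, hj, -⟩ | ⟨i, hi, hi2, hw⟩) | ⟨i, hi, hi2, rfl⟩)
  · omega
  · obtain rfl : i = 1 := by omega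
    have hr' : r⁻¹ = r := inv_eq_of_mul_eq_one_right hr
    have hrr (x : H) : r * (r * x) = x := by rw [← mul_assoc, hr, one_mul]
    rcases hw with rfl | rfl | rfl <;>
      simp [lift_fσ _ le_rfl one_le_two, lift_fσ _ one_le_two le_rfl,
        lift_fρ _ le_rfl one_le_two, lift_fρ _ one_le_two le_rfl, hr', mul_assoc, hrr, hr]
  · simp [lift_fρ _ hi hi2, hr]

def lift (t r : H) (hr : r * r = 1) : VB 3 →* H :=
  PresentedGroup.toGroup (lift_eq_one_of_mem_vbRels (t := t) hr)

theorem lift_vσ_one (t r : H) (hr : r * r = 1) : lift t r hr (vσ 3 1) = t :=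
  lift_fσ _ le_rfl one_le_two

theorem lift_vρ_one (t r : H) (hr : r * r = 1) : lift t r hr (vρ 3 1) = r :=
  lift_fρ _ le_rfl one_le_two

end VB3

open RegularWreathProduct Lamplighter in
/-- `VB_3'` is not finitely generated: no finite subset of `VB_3'`
generates it as a group. -/
theorem VB3_commutator_not_finitely_generated :
    ¬ ∃ S : Finset (VB 3), (S : Set (VB 3)) ⊆ (commutator (VB 3) : Subgroup (VB 3)) ∧
        Subgroup.closure (S : Set (VB 3)) = commutator (VB 3) := by
  rintro ⟨S, -, hS⟩
  let φ := VB3.lift shift lamp lamp_mul_self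
  let K := (commutator (VB 3)).map φ
  have hK : K ≤ rightHom.ker := map_commutator_le_ker_rightHom φ
  have : Finite K := (Subgroup.FG.map ⟨S, hS⟩ φ).finite_of_commute_of_isOfFinOrder
    (fun x hx y hy => commute_of_mem_ker_rightHom (hK hx) (hK hy))
    (fun x hx => isOfFinOrder_iff_pow_eq_one.2
      ⟨2, two_pos, sq_eq_one_of_mem_ker_rightHom Int.units_sq (hK hx)⟩)
  have hmem (k : ℤ) : ⁅shift ^ k, lamp⁆ ∈ K :=
    ⟨⁅vσ 3 1 ^ k, vρ 3 1⁆, Subgroup.commutator_mem_commutator trivial trivial, by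
      simp [φ, map_commutatorElement, VB3.lift_vσ_one, VB3.lift_vρ_one]⟩
  exact Set.infinite_of_injective_forall_mem injective_commutatorElement_shift_zpow_lamp hmem
    (Set.toFinite _)
end

section
/- For every n ≥ 4, the commutator subgroup VB_n' equals the subgroup of VB_n generated by the 2n−3 elements c_3, c_4, …, c_{n−1}, f_0, f_1, f_2, g_{0,3}, g_{0,4}, …, g_{0,n−1}; in particular, VB_n' is finitely generated and can be generated by 2n−3 elements, and VB_4' is generated by the 5 elements c_3, f_0, f_1, f_2, g_{0,3}. -/
/-!
The generators lie in `VB_n'`: in the abelianization all `σ_i` become equal (a braid relation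
`xyx = yxy` forces `x = y` in an abelian group), all `ρ_i` become equal, and `ρ_1² = 1`.

Conversely, let `H` be the subgroup they generate. Conjugation by `σ_1` shifts `f_m ↦ f_{m+1}`
and `g_{m,l} ↦ g_{m+1,l}`, and it preserves `H`: the braid relation `σ_1 σ_2 σ_1 = σ_2 σ_1 σ_2`,
with `σ_2 = f_0⁻¹ σ_1 f_0`, writes `f_3` and `f_{-1}` through `f_0, f_1, f_2`; and
`Q = ρ_2 ρ_1 ρ_3 ρ_2 = g_{0,3} f_0⁻¹ g_{0,3} f_0` satisfies `σ_3 = Q⁻¹ σ_1 Q`, whence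
`g_{m,3} = f_m⁻¹ Q c_3^m f_m` and `g_{m,l} = ρ_l ρ_3 g_{m,3}`. Hence right multiplication of the
representatives `σ_1^m` and `σ_1^m ρ_1` by a generator `σ_i^{±1}` or `ρ_i` only changes them by a
left factor from `H` (a Reidemeister–Schreier rewriting), so every element is `h t` with `h ∈ H`
and `t` a representative. The map `VB_n → ℤ × ℤ/2` counting `σ`-exponents and `ρ`-parity
kills `VB_n'` but no representative other than `1`, so `VB_n' ⊆ H`.
-/

namespace Subgroup

variable {G : Type*} [Group G]

theorem mem_normalizer_closure_of_conj_mem {s : Set G} {g : G}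
    (h₁ : ∀ x ∈ s, g * x * g⁻¹ ∈ closure s) (h₂ : ∀ x ∈ s, g⁻¹ * x * g ∈ closure s) :
    g ∈ normalizer (closure s : Set G) := by
  have conj_le : ∀ a : G, (∀ x ∈ s, a * x * a⁻¹ ∈ closure s) →
      ∀ y ∈ closure s, a * y * a⁻¹ ∈ closure s := fun a ha y hy =>
    (closure_le ((closure s).comap (MulAut.conj a).toMonoidHom)).2 ha hy
  refine mem_normalizer_iff.2 fun y => ⟨conj_le g h₁ y, fun hy => ?_⟩
  simpa [mul_assoc] using conj_le g⁻¹ (by simpa using h₂) _ hy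

/-- The hypotheses `hmul`, `hinv` make `H * T` stable under right multiplication by the
generators, so `H * T = G`; every `x ∈ K` is then `h t` with `t ∈ T ∩ K = {1}`. -/
theorem le_of_forall_mul_mem_mul_transversal {H K : Subgroup G} {s T : Set G}
    (hs : closure s = ⊤) (hT : 1 ∈ T)
    (hmul : ∀ g ∈ s, ∀ t ∈ T, ∃ t' ∈ T, t * g * t'⁻¹ ∈ H)
    (hinv : ∀ g ∈ s, ∀ t ∈ T, ∃ t' ∈ T, t * g⁻¹ * t'⁻¹ ∈ H)
    (hHK : H ≤ K) (hTK : ∀ t ∈ T, t ∈ K → t = 1) : K ≤ H := by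
  have hcoset : ∀ x : G, ∃ t ∈ T, x * t⁻¹ ∈ H := by
    intro x
    induction (hs ▸ mem_top x : x ∈ closure s) using closure_induction_right with
    | one => exact ⟨1, hT, by simp⟩
    | mul_right y _ g hg ih =>
      obtain ⟨t, ht, hy⟩ := ih
      obtain ⟨t', ht', hg⟩ := hmul g hg t ht
      exact ⟨t', ht', by simpa [mul_assoc] using mul_mem hy hg⟩
    | mul_inv_cancel y _ g hg ih =>
      obtain ⟨t, ht, hy⟩ := ih
      obtain ⟨t', ht', hg⟩ := hinv g hg t ht
      exact ⟨t', ht', by simpa [mul_assoc] using mul_mem hy hg⟩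
  intro x hx
  obtain ⟨t, ht, hxt⟩ := hcoset x
  have htK : t ∈ K := by simpa using mul_mem (inv_mem (hHK hxt)) hx
  simpa [hTK t ht htK] using hxt

end Subgroup

theorem Abelianization.of_eq_of_braid {G : Type*} [Group G] (a : ℕ → G) {N : ℕ}
    (hbraid : ∀ i, 1 ≤ i → i + 1 ≤ N →
      a i * a (i + 1) * a i = a (i + 1) * a i * a (i + 1)) :
    ∀ i, 1 ≤ i → i ≤ N → of (a i) = of (a 1) := by
  intro i
  induction i with
  | zero => intro h; omega
  | succ i ih =>
    intro _ hi
    rcases Nat.eq_zero_or_pos i with rfl | hpos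
    · rfl
    have h := congrArg of (hbraid i hpos hi)
    simp only [map_mul] at h
    rw [← ih hpos (by omega)]
    exact (mul_left_cancel (h.trans (by rw [mul_comm (of (a (i + 1))) (of (a i))]))).symm

section Relations

variable {n i j : ℕ}

theorem vρ_mul_self (hi : 1 ≤ i) (hin : i ≤ n - 1) : vρ n i * vρ n i = 1 := by
  simpa [vρ] using PresentedGroup.one_of_mem (rels := vbRels n)
    (Set.mem_union_right _ ⟨i, hi, hin, rfl⟩)

theorem vρ_inv (hi : 1 ≤ i) (hin : i ≤ n - 1) : (vρ n i)⁻¹ = vρ n i :=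
  inv_eq_of_mul_eq_one_right (vρ_mul_self hi hin)

theorem vσ_commute (hi : 1 ≤ i) (hij : i + 2 ≤ j) (hj : j ≤ n - 1) :
    Commute (vσ n i) (vσ n j) :=
  commutatorElement_eq_one_iff_commute.1 <| by
    simpa [vσ, commutatorElement_def] using PresentedGroup.one_of_mem (rels := vbRels n)
      (Set.mem_union_left _ (Set.mem_union_left _ ⟨i, j, hi, hij, hj, Or.inl rfl⟩))

theorem vρ_commute (hi : 1 ≤ i) (hij : i + 2 ≤ j) (hj : j ≤ n - 1) :
    Commute (vρ n i) (vρ n j) :=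
  commutatorElement_eq_one_iff_commute.1 <| by
    simpa [vρ, commutatorElement_def] using PresentedGroup.one_of_mem (rels := vbRels n)
      (Set.mem_union_left _ (Set.mem_union_left _ ⟨i, j, hi, hij, hj, Or.inr (Or.inl rfl)⟩))

theorem vσ_commute_vρ (hi : 1 ≤ i) (hij : i + 2 ≤ j) (hj : j ≤ n - 1) :
    Commute (vσ n i) (vρ n j) :=
  commutatorElement_eq_one_iff_commute.1 <| by
    simpa [vσ, vρ, commutatorElement_def] using PresentedGroup.one_of_mem (rels := vbRels n)
      (Set.mem_union_left _
        (Set.mem_union_left _ ⟨i, j, hi, hij, hj, Or.inr (Or.inr (Or.inl rfl))⟩))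

theorem vρ_commute_vσ (hi : 1 ≤ i) (hij : i + 2 ≤ j) (hj : j ≤ n - 1) :
    Commute (vρ n i) (vσ n j) :=
  Commute.symm <| commutatorElement_eq_one_iff_commute.1 <| by
    simpa [vσ, vρ, commutatorElement_def] using PresentedGroup.one_of_mem (rels := vbRels n)
      (Set.mem_union_left _
        (Set.mem_union_left _ ⟨i, j, hi, hij, hj, Or.inr (Or.inr (Or.inr rfl))⟩))

theorem vσ_braid (hi : 1 ≤ i) (hin : i + 1 ≤ n - 1) :
    vσ n i * vσ n (i + 1) * vσ n i = vσ n (i + 1) * vσ n i * vσ n (i + 1) := by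
  have h := PresentedGroup.one_of_mem (rels := vbRels n)
    (Set.mem_union_left _ (Set.mem_union_right _ ⟨i, hi, hin, Or.inl rfl⟩))
  rw [← mul_inv_eq_one, ← h]
  simp only [vσ, map_mul, map_inv]
  group

theorem vρ_braid (hi : 1 ≤ i) (hin : i + 1 ≤ n - 1) :
    vρ n i * vρ n (i + 1) * vρ n i = vρ n (i + 1) * vρ n i * vρ n (i + 1) := by
  have h := PresentedGroup.one_of_mem (rels := vbRels n)
    (Set.mem_union_left _ (Set.mem_union_right _ ⟨i, hi, hin, Or.inr (Or.inl rfl)⟩))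
  rw [← mul_inv_eq_one, ← h]
  simp only [vρ, map_mul, map_inv]
  group

theorem vρ_mul_vρ_mul_vσ (hi : 1 ≤ i) (hin : i + 1 ≤ n - 1) :
    vρ n i * vρ n (i + 1) * vσ n i = vσ n (i + 1) * vρ n i * vρ n (i + 1) := by
  have h := PresentedGroup.one_of_mem (rels := vbRels n)
    (Set.mem_union_left _ (Set.mem_union_right _ ⟨i, hi, hin, Or.inr (Or.inr rfl)⟩))
  rw [← mul_inv_eq_one, ← h]
  simp only [vσ, vρ, map_mul, map_inv]
  group

end Relations

theorem of_inl_eq_vσ {n : ℕ} (i : Fin (n - 1)) :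
    (PresentedGroup.of (Sum.inl i) : VB n) = vσ n (i + 1) := by
  rw [vσ, fσ, dif_pos ⟨by omega, by simp⟩]
  rfl

theorem of_inr_eq_vρ {n : ℕ} (i : Fin (n - 1)) :
    (PresentedGroup.of (Sum.inr i) : VB n) = vρ n (i + 1) := by
  rw [vρ, fρ, dif_pos ⟨by omega, by simp⟩]
  rfl

section Exponents

variable {G : Type*} [Group G] {n i : ℕ}

theorem lift_fσ (f : VBGen n → G) (hi : 1 ≤ i) (hin : i ≤ n - 1) :
    FreeGroup.lift f (fσ n i) = f (Sum.inl ⟨i - 1, by omega⟩) := by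
  rw [fσ, dif_pos ⟨hi, by omega⟩, FreeGroup.lift_apply_of]

theorem lift_fρ (f : VBGen n → G) (hi : 1 ≤ i) (hin : i ≤ n - 1) :
    FreeGroup.lift f (fρ n i) = f (Sum.inr ⟨i - 1, by omega⟩) := by
  rw [fρ, dif_pos ⟨hi, by omega⟩, FreeGroup.lift_apply_of]

def vbExponents (n : ℕ) : VB n →* Multiplicative (ℤ × ZMod 2) :=
  PresentedGroup.toGroup (f := Sum.elim (fun _ => .ofAdd (1, 0)) (fun _ => .ofAdd (0, 1))) <| by
    rintro r ((⟨i, j, hi, hij, hj, hr⟩ | ⟨i, hi, hin, hr⟩) | ⟨i, hi, hin, rfl⟩)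
    · rcases hr with rfl | rfl | rfl | rfl <;>
        simp only [map_mul, map_inv, lift_fσ _ hi (by omega : i ≤ n - 1),
          lift_fσ _ (by omega : 1 ≤ j) hj, lift_fρ _ hi (by omega : i ≤ n - 1),
          lift_fρ _ (by omega : 1 ≤ j) hj, Sum.elim_inl, Sum.elim_inr] <;> decide
    · rcases hr with rfl | rfl | rfl <;>
        simp only [map_mul, map_inv, lift_fσ _ hi (by omega : i ≤ n - 1),
          lift_fσ _ (by omega : 1 ≤ i + 1) hin, lift_fρ _ hi (by omega : i ≤ n - 1),
          lift_fρ _ (by omega : 1 ≤ i + 1) hin, Sum.elim_inl, Sum.elim_inr] <;> decide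
    · simp only [map_mul, lift_fρ _ hi hin, Sum.elim_inr]; decide

theorem vbExponents_vσ (hi : 1 ≤ i) (hin : i ≤ n - 1) :
    vbExponents n (vσ n i) = .ofAdd (1, 0) :=
  lift_fσ _ hi hin

theorem vbExponents_vρ (hi : 1 ≤ i) (hin : i ≤ n - 1) :
    vbExponents n (vρ n i) = .ofAdd (0, 1) :=
  lift_fρ _ hi hin

end Exponents

section Identities

variable {n : ℕ}

theorem vf_eq (m : ℤ) : vf n m 0 = vσ n 1 ^ m * (vρ n 2 * vρ n 1) * vσ n 1 ^ (-m) := by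
  simp [vf]

theorem vσ_two_eq (hn : 3 ≤ n) :
    vσ n 2 = (vρ n 2 * vρ n 1)⁻¹ * vσ n 1 * (vρ n 2 * vρ n 1) := by
  have h : vρ n 1 * vρ n 2 * vσ n 1 = vσ n 2 * vρ n 1 * vρ n 2 :=
    vρ_mul_vρ_mul_vσ le_rfl (by omega)
  calc vσ n 2 = vσ n 2 * vρ n 1 * vρ n 2 * (vρ n 1 * vρ n 2)⁻¹ := by group
    _ = vρ n 1 * vρ n 2 * vσ n 1 * (vρ n 1 * vρ n 2)⁻¹ := by rw [h]
    _ = _ := by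
      simp only [mul_inv_rev, vρ_inv (n := n) (i := 1) le_rfl (by omega),
        vρ_inv (n := n) (i := 2) (by omega) (by omega)]

theorem vσ_three_eq (hn : 4 ≤ n) :
    vσ n 3 = (vρ n 2 * vρ n 1 * vρ n 3 * vρ n 2)⁻¹ * vσ n 1 *
      (vρ n 2 * vρ n 1 * vρ n 3 * vρ n 2) := by
  have h : vρ n 2 * vρ n 3 * vσ n 2 = vσ n 3 * vρ n 2 * vρ n 3 :=
    vρ_mul_vρ_mul_vσ (by omega) (by omega)
  calc vσ n 3 = vσ n 3 * vρ n 2 * vρ n 3 * (vρ n 2 * vρ n 3)⁻¹ := by group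
    _ = vρ n 2 * vρ n 3 * vσ n 2 * (vρ n 2 * vρ n 3)⁻¹ := by rw [h]
    _ = _ := by
      simp only [vσ_two_eq (by omega : 3 ≤ n), mul_inv_rev,
        vρ_inv (n := n) (i := 1) le_rfl (by omega),
        vρ_inv (n := n) (i := 2) (by omega) (by omega),
        vρ_inv (n := n) (i := 3) (by omega) (by omega)]
      group

theorem vρ_word_eq (hn : 4 ≤ n) :
    vρ n 2 * vρ n 1 * vρ n 3 * vρ n 2
      = vρ n 3 * vρ n 1 * (vρ n 2 * vρ n 1)⁻¹ * (vρ n 3 * vρ n 1) * (vρ n 2 * vρ n 1) := by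
  have h13 : Commute (vρ n 1) (vρ n 3) := vρ_commute le_rfl le_rfl (by omega)
  have h12 : vρ n 1 * vρ n 2 * vρ n 1 = vρ n 2 * vρ n 1 * vρ n 2 :=
    vρ_braid le_rfl (by omega)
  have h23 : vρ n 2 * vρ n 3 * vρ n 2 = vρ n 3 * vρ n 2 * vρ n 3 :=
    vρ_braid (by omega) (by omega)
  symm
  calc _ = vρ n 3 * (vρ n 2)⁻¹ * vρ n 3 * (vρ n 1 * vρ n 2 * vρ n 1) := by group
    _ = (vρ n 3 * vρ n 2 * vρ n 3) * (vρ n 2 * vρ n 1 * vρ n 2) := by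
      rw [vρ_inv (by omega) (by omega), h12]
    _ = vρ n 2 * (vρ n 3 * (vρ n 2 * vρ n 2) * vρ n 1) * vρ n 2 := by rw [← h23]; group
    _ = vρ n 2 * (vρ n 3 * vρ n 1) * vρ n 2 := by
      rw [vρ_mul_self (by omega) (by omega), mul_one]
    _ = _ := by rw [← h13.eq]; group

theorem vf_recurrence (hn : 3 ≤ n) (m : ℤ) :
    vf n m 0 = vf n (m + 1) 0 * (vf n (m + 2) 0)⁻¹ * vf n (m + 3) 0 * (vf n (m + 2) 0)⁻¹ *
      vf n (m + 1) 0 := by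
  have hb : vσ n 2 * vσ n 1 * vσ n 2 = vσ n 1 * vσ n 2 * vσ n 1 :=
    (vσ_braid le_rfl (by omega)).symm
  rw [vσ_two_eq hn] at hb
  simp only [vf_eq]
  generalize vσ n 1 = s at hb ⊢
  generalize vρ n 2 * vρ n 1 = u at hb ⊢
  have core : s * u * s * u⁻¹ * s * u * s⁻¹ * u⁻¹ * s⁻¹ * u * s⁻¹ = u :=
    calc _ = u * ((u⁻¹ * s * u) * s * (u⁻¹ * s * u)) * (s * (u⁻¹ * s * u) * s)⁻¹ := by
          group
      _ = u := by rw [hb]; group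
  calc s ^ m * u * s ^ (-m)
      = s ^ m * (s * u * s * u⁻¹ * s * u * s⁻¹ * u⁻¹ * s⁻¹ * u * s⁻¹) * s ^ (-m) := by
        rw [core]
    _ = _ := by group

theorem zpow_mul_vρ_word_mul_zpow (hn : 4 ≤ n) (m : ℤ) :
    vσ n 1 ^ m * (vρ n 2 * vρ n 1 * vρ n 3 * vρ n 2) * vσ n 1 ^ (-m)
      = vρ n 2 * vρ n 1 * vρ n 3 * vρ n 2 * vc n 3 ^ m := by
  have hs := vσ_three_eq hn
  have hc : Commute (vσ n 3) (vσ n 1)⁻¹ :=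
    (vσ_commute le_rfl le_rfl (by omega)).symm.inv_right
  rw [vc, hc.mul_zpow]
  generalize vρ n 2 * vρ n 1 * vρ n 3 * vρ n 2 = Q at hs ⊢
  replace hs : vσ n 1 = Q * vσ n 3 * Q⁻¹ := by rw [hs]; group
  calc vσ n 1 ^ m * Q * vσ n 1 ^ (-m) = (Q * vσ n 3 * Q⁻¹) ^ m * Q * vσ n 1 ^ (-m) := by
        rw [← hs]
    _ = _ := by rw [conj_zpow]; group

theorem vg_three_eq (hn : 4 ≤ n) (m : ℤ) :
    vg n m 3
      = (vf n m 0)⁻¹ * (vρ n 2 * vρ n 1 * vρ n 3 * vρ n 2 * vc n 3 ^ m) * vf n m 0 := by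
  rw [← zpow_mul_vρ_word_mul_zpow hn, vf_eq, vg]
  calc _ = vσ n 1 ^ m * (vρ n 3 * (vρ n 2 * vρ n 2) * vρ n 1) * vσ n 1 ^ (-m) := by
        rw [vρ_mul_self (by omega) (by omega), mul_one]
    _ = _ := by group

theorem vg_eq_mul_vg_three {l : ℕ} (hl3 : 3 ≤ l) (hl : l ≤ n - 1) (m : ℤ) :
    vg n m l = vρ n l * vρ n 3 * vg n m 3 := by
  have hc : Commute (vσ n 1 ^ m) (vρ n l * vρ n 3) :=
    ((vσ_commute_vρ le_rfl (by omega) hl).mul_right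
      (vσ_commute_vρ le_rfl le_rfl (by omega))).zpow_left m
  calc vg n m l = vσ n 1 ^ m * (vρ n l * (vρ n 3 * vρ n 3) * vρ n 1) * vσ n 1 ^ (-m) := by
        rw [vρ_mul_self (by omega) (by omega), mul_one, vg]
    _ = vσ n 1 ^ m * (vρ n l * vρ n 3) * (vρ n 3 * vρ n 1) * vσ n 1 ^ (-m) := by group
    _ = _ := by rw [hc.eq, vg]; group

end Identities

def vbCommGens (n : ℕ) : Set (VB n) :=
  {x | ∃ l, 3 ≤ l ∧ l ≤ n - 1 ∧ x = vc n l} ∪ {vf n 0 0, vf n 1 0, vf n 2 0} ∪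
    {x | ∃ l, 3 ≤ l ∧ l ≤ n - 1 ∧ x = vg n 0 l}

section Generators

open Subgroup

variable {n : ℕ}

theorem vc_mem_closure {l : ℕ} (hl3 : 3 ≤ l) (hl : l ≤ n - 1) :
    vc n l ∈ closure (vbCommGens n) :=
  Subgroup.subset_closure (Or.inl (Or.inl ⟨l, hl3, hl, rfl⟩))

theorem vg_zero_mem_closure {l : ℕ} (hl3 : 3 ≤ l) (hl : l ≤ n - 1) :
    vg n 0 l ∈ closure (vbCommGens n) :=
  Subgroup.subset_closure (Or.inr ⟨l, hl3, hl, rfl⟩)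

theorem closure_vbCommGens_le_commutator (hn : 3 ≤ n) :
    closure (vbCommGens n) ≤ commutator (VB n) := by
  have hσ := Abelianization.of_eq_of_braid (vσ n) (fun _ hi hin => vσ_braid hi hin)
  have hρ := Abelianization.of_eq_of_braid (vρ n) (fun _ hi hin => vρ_braid hi hin)
  have hρ1 : Abelianization.of (vρ n 1) * Abelianization.of (vρ n 1) = 1 := by
    rw [← map_mul, vρ_mul_self le_rfl (by omega), map_one]
  rw [closure_le]
  rintro x ((⟨l, hl3, hl, rfl⟩ | hx) | ⟨l, hl3, hl, rfl⟩) <;>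
    rw [SetLike.mem_coe, ← Abelianization.ker_of, MonoidHom.mem_ker]
  · simp [vc, hσ l (by omega) hl]
  · rcases hx with rfl | rfl | rfl <;> simp [vf_eq, hρ 2 (by omega) (by omega), hρ1]
  · simp [vg, hρ l (by omega) hl, hρ1]

theorem vf_mem_closure (hn : 3 ≤ n) {m : ℤ} (hm₁ : -1 ≤ m) (hm₃ : m ≤ 3) :
    vf n m 0 ∈ closure (vbCommGens n) := by
  have f0 : vf n 0 0 ∈ closure (vbCommGens n) := Subgroup.subset_closure (by simp [vbCommGens])
  have f1 : vf n 1 0 ∈ closure (vbCommGens n) := Subgroup.subset_closure (by simp [vbCommGens])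
  have f2 : vf n 2 0 ∈ closure (vbCommGens n) := Subgroup.subset_closure (by simp [vbCommGens])
  have hneg := vf_recurrence hn (-1)
  simp only [Int.reduceAdd] at hneg
  have h0 := vf_recurrence hn 0
  simp only [zero_add] at h0
  have h3 : vf n 3 0 = vf n 2 0 * (vf n 1 0)⁻¹ * vf n 0 0 * (vf n 1 0)⁻¹ * vf n 2 0 := by
    rw [h0]; group
  interval_cases m
  · rw [hneg]; exact mul_mem (mul_mem (mul_mem (mul_mem f0 (inv_mem f1)) f2) (inv_mem f1)) f0
  · exact f0
  · exact f1
  · exact f2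
  · rw [h3]; exact mul_mem (mul_mem (mul_mem (mul_mem f2 (inv_mem f1)) f0) (inv_mem f1)) f2

theorem vρ_word_mem_closure (hn : 4 ≤ n) :
    vρ n 2 * vρ n 1 * vρ n 3 * vρ n 2 ∈ closure (vbCommGens n) := by
  have hf := vf_mem_closure (n := n) (m := 0) (by omega) (by norm_num) (by norm_num)
  have hg := vg_zero_mem_closure (n := n) le_rfl (by omega)
  simp only [vf_eq, vg, zpow_zero, neg_zero, one_mul, mul_one] at hf hg
  rw [vρ_word_eq hn]
  exact mul_mem (mul_mem (mul_mem hg (inv_mem hf)) hg) hf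

theorem vg_mem_closure_of_vf_mem (hn : 4 ≤ n) {m : ℤ} (hf : vf n m 0 ∈ closure (vbCommGens n))
    {l : ℕ} (hl3 : 3 ≤ l) (hl : l ≤ n - 1) : vg n m l ∈ closure (vbCommGens n) := by
  have hlρ : vρ n l * vρ n 3 ∈ closure (vbCommGens n) := by
    rw [eq_mul_inv_of_mul_eq (vg_eq_mul_vg_three hl3 hl 0).symm]
    exact mul_mem (vg_zero_mem_closure hl3 hl) (inv_mem (vg_zero_mem_closure le_rfl (by omega)))
  rw [vg_eq_mul_vg_three hl3 hl, vg_three_eq hn]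
  exact mul_mem hlρ (mul_mem (mul_mem (inv_mem hf) (mul_mem (vρ_word_mem_closure hn)
    (zpow_mem (vc_mem_closure le_rfl (by omega)) m))) hf)

theorem vσ_one_mem_normalizer (hn : 4 ≤ n) :
    vσ n 1 ∈ normalizer (closure (vbCommGens n) : Set (VB n)) := by
  have hc : ∀ l, 3 ≤ l → l ≤ n - 1 → Commute (vσ n 1) (vc n l) := fun l hl3 hl =>
    (vσ_commute le_rfl (by omega) hl).mul_right (Commute.refl _).inv_right
  have hf : ∀ m k : ℤ, vσ n 1 ^ k * vf n m 0 * vσ n 1 ^ (-k) = vf n (m + k) 0 := by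
    intro m k; simp only [vf_eq]; group
  have hg : ∀ (m k : ℤ) l, vσ n 1 ^ k * vg n m l * vσ n 1 ^ (-k) = vg n (m + k) l := by
    intro m k l; simp only [vg]; group
  have hmem : ∀ k : ℤ, (k = 1 ∨ k = -1) → ∀ x ∈ vbCommGens n,
      vσ n 1 ^ k * x * vσ n 1 ^ (-k) ∈ closure (vbCommGens n) := by
    rintro k hk x ((⟨l, hl3, hl, rfl⟩ | hx) | ⟨l, hl3, hl, rfl⟩)
    · rw [((hc l hl3 hl).zpow_left k).eq, mul_assoc, ← zpow_add, add_neg_cancel, zpow_zero,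
        mul_one]
      exact vc_mem_closure hl3 hl
    · rcases hx with rfl | rfl | rfl <;> rw [hf] <;>
        exact vf_mem_closure (by omega) (by omega) (by omega)
    · rw [hg]
      exact vg_mem_closure_of_vf_mem hn (vf_mem_closure (by omega) (by omega) (by omega)) hl3 hl
  exact mem_normalizer_closure_of_conj_mem (fun x hx => by simpa using hmem 1 (.inl rfl) x hx)
    (fun x hx => by simpa using hmem (-1) (.inr rfl) x hx)

theorem zpow_mul_mul_zpow_mem (hn : 4 ≤ n) (m : ℤ) {x : VB n}
    (hx : x ∈ closure (vbCommGens n)) :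
    vσ n 1 ^ m * x * vσ n 1 ^ (-m) ∈ closure (vbCommGens n) := by
  rw [zpow_neg]
  exact (mem_normalizer_iff.1 (zpow_mem (vσ_one_mem_normalizer hn) m) x).1 hx

theorem vσ_mul_inv_mem_closure (hn : 3 ≤ n) {i : ℕ} (hi : 1 ≤ i) (hin : i ≤ n - 1) :
    vσ n i * (vσ n 1)⁻¹ ∈ closure (vbCommGens n) := by
  rcases (by omega : i = 1 ∨ i = 2 ∨ 3 ≤ i) with rfl | rfl | hi3
  · rw [mul_inv_cancel]; exact one_mem _
  · have h : vσ n 2 * (vσ n 1)⁻¹ = (vf n 0 0)⁻¹ * vf n 1 0 := by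
      rw [vσ_two_eq (by omega)]; simp only [vf_eq]; group
    rw [h]
    exact mul_mem (inv_mem (vf_mem_closure (by omega) (by norm_num) (by norm_num)))
      (vf_mem_closure (by omega) (by norm_num) (by norm_num))
  · exact vc_mem_closure hi3 hin

theorem va_zero_mem_closure (hn : 4 ≤ n) : va n 0 ∈ closure (vbCommGens n) := by
  have hc : Commute (vσ n 1) (vρ n 3) := vσ_commute_vρ le_rfl le_rfl (by omega)
  have h : va n 0 = (vg n 0 3)⁻¹ * (vσ n 1 ^ (1 : ℤ) * vg n 0 3 * vσ n 1 ^ (-1 : ℤ)) := by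
    simp only [va, vg, zpow_zero, neg_zero, one_mul, mul_one, zpow_one, zpow_neg]
    calc _ = (vρ n 1)⁻¹ * vσ n 1 * vρ n 1 * (vσ n 1)⁻¹ := by rw [vρ_inv le_rfl (by omega)]
      _ = (vρ n 3 * vρ n 1)⁻¹ * (vρ n 3 * vσ n 1 * vρ n 1 * (vσ n 1)⁻¹) := by group
      _ = _ := by rw [← hc.eq]; group
  rw [h]
  exact mul_mem (inv_mem (vg_zero_mem_closure le_rfl (by omega)))
    (zpow_mul_mul_zpow_mem hn 1 (vg_zero_mem_closure le_rfl (by omega)))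

theorem vρ_vσ_vρ_mul_inv_mem_closure (hn : 4 ≤ n) {i : ℕ} (hi : 1 ≤ i) (hin : i ≤ n - 1) :
    vρ n 1 * vσ n i * vρ n 1 * (vσ n 1)⁻¹ ∈ closure (vbCommGens n) := by
  have ha : vρ n 1 * vσ n 1 * vρ n 1 * (vσ n 1)⁻¹ ∈ closure (vbCommGens n) := by
    simpa [va] using va_zero_mem_closure hn
  rcases (by omega : i = 1 ∨ i = 2 ∨ 3 ≤ i) with rfl | rfl | hi3
  · exact ha
  · have hρ2 : (vρ n 2)⁻¹ = vρ n 2 := vρ_inv (by omega) (by omega)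
    have hρ11 : vρ n 1 * vρ n 1 = 1 := vρ_mul_self le_rfl (by omega)
    have h : vρ n 1 * vσ n 2 * vρ n 1 * (vσ n 1)⁻¹
        = vf n 0 0 * (vρ n 1 * vσ n 1 * vρ n 1 * (vσ n 1)⁻¹) *
          (vσ n 1 ^ (1 : ℤ) * vf n 0 0 * vσ n 1 ^ (-1 : ℤ))⁻¹ := by
      rw [vσ_two_eq (by omega)]
      simp only [vf_eq, zpow_zero, neg_zero, one_mul, mul_one, zpow_one, zpow_neg]
      calc _ = (vρ n 2)⁻¹ * vσ n 1 * vρ n 2 * (vρ n 1 * vρ n 1) * (vσ n 1)⁻¹ := by group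
        _ = vρ n 2 * (vρ n 1 * vρ n 1) * vσ n 1 * (vρ n 2)⁻¹ * (vσ n 1)⁻¹ := by
          simp only [hρ11, hρ2, mul_one]
        _ = _ := by group
    rw [h]
    exact mul_mem (mul_mem (vf_mem_closure (by omega) (by norm_num) (by norm_num)) ha)
      (inv_mem (zpow_mul_mul_zpow_mem hn 1
        (vf_mem_closure (by omega) (by norm_num) (by norm_num))))
  · have hc : Commute (vρ n 1) (vσ n i) := vρ_commute_vσ le_rfl (by omega) hin
    rw [hc.eq, mul_assoc (vσ n i), vρ_mul_self le_rfl (by omega), mul_one]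
    exact vc_mem_closure hi3 hin

theorem vρ_mul_vρ_one_mem_closure (hn : 3 ≤ n) {i : ℕ} (hi : 1 ≤ i) (hin : i ≤ n - 1) :
    vρ n i * vρ n 1 ∈ closure (vbCommGens n) := by
  rcases (by omega : i = 1 ∨ i = 2 ∨ 3 ≤ i) with rfl | rfl | hi3
  · rw [vρ_mul_self le_rfl (by omega)]; exact one_mem _
  · simpa [vf_eq] using vf_mem_closure (n := n) (m := 0) (by omega) (by norm_num) (by norm_num)
  · simpa [vg] using vg_zero_mem_closure hi3 hin

end Generators

def vbTransversal (n : ℕ) : Set (VB n) :=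
  {t | ∃ m : ℤ, t = vσ n 1 ^ m ∨ t = vσ n 1 ^ m * vρ n 1}

section Transversal

open Subgroup

variable {n : ℕ}

theorem exists_mul_vσ_mem_closure (hn : 4 ≤ n) {i : ℕ} (hi : 1 ≤ i) (hin : i ≤ n - 1)
    {t : VB n} (ht : t ∈ vbTransversal n) :
    (∃ t' ∈ vbTransversal n, t * vσ n i * t'⁻¹ ∈ closure (vbCommGens n)) ∧
      ∃ t' ∈ vbTransversal n, t * (vσ n i)⁻¹ * t'⁻¹ ∈ closure (vbCommGens n) := by
  have hρ : (vρ n 1)⁻¹ = vρ n 1 := vρ_inv le_rfl (by omega)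
  have hx := vσ_mul_inv_mem_closure (by omega) hi hin
  have hy := vρ_vσ_vρ_mul_inv_mem_closure hn hi hin
  obtain ⟨m, rfl | rfl⟩ := ht
  · refine ⟨⟨_, ⟨m + 1, .inl rfl⟩, ?_⟩, ⟨_, ⟨m - 1, .inl rfl⟩, ?_⟩⟩
    · convert zpow_mul_mul_zpow_mem hn m hx using 1; group
    · convert inv_mem (zpow_mul_mul_zpow_mem hn (m - 1) hx) using 1; group
  · refine ⟨⟨_, ⟨m + 1, .inr rfl⟩, ?_⟩, ⟨_, ⟨m - 1, .inr rfl⟩, ?_⟩⟩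
    · convert zpow_mul_mul_zpow_mem hn m hy using 1
      simp only [mul_inv_rev, hρ]; group
    · convert inv_mem (zpow_mul_mul_zpow_mem hn (m - 1) hy) using 1
      simp only [mul_inv_rev, hρ]; group

theorem exists_mul_vρ_mem_closure (hn : 4 ≤ n) {i : ℕ} (hi : 1 ≤ i) (hin : i ≤ n - 1)
    {t : VB n} (ht : t ∈ vbTransversal n) :
    ∃ t' ∈ vbTransversal n, t * vρ n i * t'⁻¹ ∈ closure (vbCommGens n) := by
  have hρ : (vρ n 1)⁻¹ = vρ n 1 := vρ_inv le_rfl (by omega)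
  have hρi : (vρ n i)⁻¹ = vρ n i := vρ_inv hi hin
  have hz := vρ_mul_vρ_one_mem_closure (by omega) hi hin
  obtain ⟨m, rfl | rfl⟩ := ht
  · refine ⟨_, ⟨m, .inr rfl⟩, ?_⟩
    convert zpow_mul_mul_zpow_mem hn m hz using 1
    simp only [mul_inv_rev, hρ]; group
  · refine ⟨_, ⟨m, .inl rfl⟩, ?_⟩
    convert zpow_mul_mul_zpow_mem hn m (inv_mem hz) using 1
    simp only [mul_inv_rev, hρ, hρi]; group

theorem exists_mul_generator_mem_closure (hn : 4 ≤ n) (j : VBGen n) {t : VB n}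
    (ht : t ∈ vbTransversal n) :
    (∃ t' ∈ vbTransversal n, t * PresentedGroup.of j * t'⁻¹ ∈ closure (vbCommGens n)) ∧
      ∃ t' ∈ vbTransversal n, t * (PresentedGroup.of j)⁻¹ * t'⁻¹ ∈ closure (vbCommGens n) := by
  rcases j with i | i
  · rw [of_inl_eq_vσ]
    exact exists_mul_vσ_mem_closure hn (by omega) (by omega) ht
  · rw [of_inr_eq_vρ, vρ_inv (by omega) (by omega)]
    exact ⟨exists_mul_vρ_mem_closure hn (by omega) (by omega) ht,
      exists_mul_vρ_mem_closure hn (by omega) (by omega) ht⟩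

theorem eq_one_of_mem_vbTransversal_of_mem_commutator (hn : 2 ≤ n) {t : VB n}
    (ht : t ∈ vbTransversal n) (htc : t ∈ commutator (VB n)) : t = 1 := by
  have h := MonoidHom.mem_ker.1 (Abelianization.commutator_subset_ker (vbExponents n) htc)
  obtain ⟨m, rfl | rfl⟩ := ht
  · rw [map_zpow, vbExponents_vσ le_rfl (by omega)] at h
    have hm : m = 0 := by simpa using congrArg (fun x => (Multiplicative.toAdd x).1) h
    rw [hm, zpow_zero]
  · rw [map_mul, map_zpow, vbExponents_vσ le_rfl (by omega),
      vbExponents_vρ le_rfl (by omega)] at h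
    have := congrArg (fun x => (Multiplicative.toAdd x).2) h
    simp at this

end Transversal

/-- For `n ≥ 4`, `VB_n'` is the subgroup generated by the `2n-3`
elements `c_3, …, c_{n-1}, f_0, f_1, f_2, g_{0,3}, …, g_{0,n-1}`. -/
theorem VB_commutator_generators (n : ℕ) (hn : 4 ≤ n) :
    commutator (VB n) = Subgroup.closure
      ({x | ∃ l, 3 ≤ l ∧ l ≤ n - 1 ∧ x = vc n l} ∪
       {vf n 0 0, vf n 1 0, vf n 2 0} ∪
       {x | ∃ l, 3 ≤ l ∧ l ≤ n - 1 ∧ x = vg n 0 l}) := by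
  refine le_antisymm ?_ (closure_vbCommGens_le_commutator (by omega))
  refine Subgroup.le_of_forall_mul_mem_mul_transversal (T := vbTransversal n)
    (PresentedGroup.closure_range_of _)
    ⟨0, .inl (zpow_zero _).symm⟩ ?_ ?_ (closure_vbCommGens_le_commutator (by omega))
    fun t ht => eq_one_of_mem_vbTransversal_of_mem_commutator (by omega) ht
  · rintro _ ⟨j, rfl⟩ t ht
    exact (exists_mul_generator_mem_closure hn j ht).1
  · rintro _ ⟨j, rfl⟩ t ht
    exact (exists_mul_generator_mem_closure hn j ht).2
end

section
/- For every n ≥ 2, the commutator subgroup VB_n' of the virtual braid group VB_n is finitely generated if and only if n ≥ 4. -/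
theorem schreier_ker_le {α G P : Type*} [Group G] [Group P]
    (π : FreeGroup α →* G) (hπ : Function.Surjective π)
    (θ : G →* P) (T : P → G) (hT1 : T 1 = 1) :
    θ.ker ≤ Subgroup.closure
      {x : G | ∃ (p : P) (a : α),
        x = T p * π (FreeGroup.of a) * (T (p * θ (π (FreeGroup.of a))))⁻¹} := by
  classical
  set W : Set G := {x : G | ∃ (p : P) (a : α),
        x = T p * π (FreeGroup.of a) * (T (p * θ (π (FreeGroup.of a))))⁻¹} with hW
  set N := Subgroup.closure W with hN
  have key : ∀ L : List (α × Bool), π (FreeGroup.mk L) * (T (θ (π (FreeGroup.mk L))))⁻¹ ∈ N := by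
    intro L
    induction L using List.reverseRecOn with
    | nil =>
        have : π (FreeGroup.mk []) * (T (θ (π (FreeGroup.mk []))))⁻¹ = 1 := by
          simp [← FreeGroup.one_eq_mk, hT1]
        rw [this]; exact N.one_mem
    | append_singleton L x ih =>
        obtain ⟨aa, b⟩ := x
        have hsplit : FreeGroup.mk (L ++ [(aa, b)]) = FreeGroup.mk L * FreeGroup.mk [(aa, b)] :=
          (FreeGroup.mul_mk).symm
        set g := π (FreeGroup.mk L) with hg
        set h := π (FreeGroup.mk [(aa, b)]) with hh
        have step : T (θ g) * h * (T (θ g * θ h))⁻¹ ∈ N := by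
          cases b with
          | true =>
              have : FreeGroup.mk [(aa, true)] = FreeGroup.of aa := rfl
              apply Subgroup.subset_closure
              exact ⟨θ g, aa, by rw [hh, this]⟩
          | false =>
              have hinv : FreeGroup.mk [(aa, false)] = (FreeGroup.of aa)⁻¹ := by
                rw [show FreeGroup.of aa = FreeGroup.mk [(aa, true)] from rfl,
                  FreeGroup.inv_mk]; rfl
              have h2 : h = (π (FreeGroup.of aa))⁻¹ := by rw [hh, hinv, map_inv]
              rw [← Subgroup.inv_mem_iff]
              set q := θ (π (FreeGroup.of aa)) with hq
              have h3 : θ h = q⁻¹ := by rw [h2, map_inv]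
              have : (T (θ g) * h * (T (θ g * θ h))⁻¹)⁻¹
                  = T (θ g * θ h) * π (FreeGroup.of aa) *
                    (T ((θ g * θ h) * q))⁻¹ := by
                rw [h3, h2, inv_mul_cancel_right]; group
              rw [this]
              exact Subgroup.subset_closure ⟨θ g * θ h, aa, rfl⟩
        have : π (FreeGroup.mk (L ++ [(aa, b)])) * (T (θ (π (FreeGroup.mk (L ++ [(aa, b)])))))⁻¹
            = (g * (T (θ g))⁻¹) * (T (θ g) * h * (T (θ g * θ h))⁻¹) := by
          rw [hsplit, map_mul, map_mul, ← hg, ← hh]; group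
        rw [this]
        exact N.mul_mem ih step
  intro k hk
  obtain ⟨w, rfl⟩ := hπ k
  have h1 := key w.toWord
  rw [FreeGroup.mk_toWord] at h1
  rw [MonoidHom.mem_ker] at hk
  simpa [hk, hT1] using h1

namespace VBAux

variable {n : ℕ}

theorem mk_rel {r : FreeGroup (VBGen n)} (h : r ∈ vbRels n) :
    PresentedGroup.mk (vbRels n) r = 1 := by
  have : r ∈ Subgroup.normalClosure (vbRels n) := Subgroup.subset_normalClosure h
  exact (QuotientGroup.eq_one_iff r).2 this

theorem comm_σσ {i j : ℕ} (h1 : 1 ≤ i) (h2 : i + 2 ≤ j) (h3 : j ≤ n - 1) :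
    vσ n i * vσ n j = vσ n j * vσ n i := by
  rw [← commutatorElement_eq_one_iff_mul_comm]
  have h : (fσ n i * fσ n j * (fσ n i)⁻¹ * (fσ n j)⁻¹) ∈ vbRels n :=
    Or.inl (Or.inl ⟨i, j, h1, h2, h3, Or.inl rfl⟩)
  simpa [commutatorElement_def, vσ, map_mul, map_inv] using mk_rel h

theorem comm_ρρ {i j : ℕ} (h1 : 1 ≤ i) (h2 : i + 2 ≤ j) (h3 : j ≤ n - 1) :
    vρ n i * vρ n j = vρ n j * vρ n i := by
  rw [← commutatorElement_eq_one_iff_mul_comm]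
  have h : (fρ n i * fρ n j * (fρ n i)⁻¹ * (fρ n j)⁻¹) ∈ vbRels n :=
    Or.inl (Or.inl ⟨i, j, h1, h2, h3, Or.inr (Or.inl rfl)⟩)
  simpa [commutatorElement_def, vρ, map_mul, map_inv] using mk_rel h

theorem comm_σρ {i j : ℕ} (h1 : 1 ≤ i) (h2 : i + 2 ≤ j) (h3 : j ≤ n - 1) :
    vσ n i * vρ n j = vρ n j * vσ n i := by
  rw [← commutatorElement_eq_one_iff_mul_comm]
  have h : (fσ n i * fρ n j * (fσ n i)⁻¹ * (fρ n j)⁻¹) ∈ vbRels n :=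
    Or.inl (Or.inl ⟨i, j, h1, h2, h3, Or.inr (Or.inr (Or.inl rfl))⟩)
  simpa [commutatorElement_def, vσ, vρ, map_mul, map_inv] using mk_rel h

theorem comm_ρσ {i j : ℕ} (h1 : 1 ≤ i) (h2 : i + 2 ≤ j) (h3 : j ≤ n - 1) :
    vσ n j * vρ n i = vρ n i * vσ n j := by
  rw [← commutatorElement_eq_one_iff_mul_comm]
  have h : (fσ n j * fρ n i * (fσ n j)⁻¹ * (fρ n i)⁻¹) ∈ vbRels n :=
    Or.inl (Or.inl ⟨i, j, h1, h2, h3, Or.inr (Or.inr (Or.inr rfl))⟩)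
  simpa [commutatorElement_def, vσ, vρ, map_mul, map_inv] using mk_rel h

theorem braid_σ {i : ℕ} (h1 : 1 ≤ i) (h2 : i + 1 ≤ n - 1) :
    vσ n i * vσ n (i+1) * vσ n i = vσ n (i+1) * vσ n i * vσ n (i+1) := by
  have h : (fσ n i * fσ n (i+1) * fσ n i * (fσ n (i+1))⁻¹ * (fσ n i)⁻¹ * (fσ n (i+1))⁻¹)
      ∈ vbRels n := Or.inl (Or.inr ⟨i, h1, h2, Or.inl rfl⟩)
  have := mk_rel h
  simp only [map_mul, map_inv] at this
  have h' : vσ n i * vσ n (i+1) * vσ n i * (vσ n (i+1))⁻¹ * (vσ n i)⁻¹ * (vσ n (i+1))⁻¹ = 1 :=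
    this
  calc vσ n i * vσ n (i+1) * vσ n i
      = (vσ n i * vσ n (i+1) * vσ n i * (vσ n (i+1))⁻¹ * (vσ n i)⁻¹ * (vσ n (i+1))⁻¹) *
        (vσ n (i+1) * vσ n i * vσ n (i+1)) := by group
    _ = vσ n (i+1) * vσ n i * vσ n (i+1) := by rw [h']; group

theorem braid_ρ {i : ℕ} (h1 : 1 ≤ i) (h2 : i + 1 ≤ n - 1) :
    vρ n i * vρ n (i+1) * vρ n i = vρ n (i+1) * vρ n i * vρ n (i+1) := by
  have h : (fρ n i * fρ n (i+1) * fρ n i * (fρ n (i+1))⁻¹ * (fρ n i)⁻¹ * (fρ n (i+1))⁻¹)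
      ∈ vbRels n := Or.inl (Or.inr ⟨i, h1, h2, Or.inr (Or.inl rfl)⟩)
  have := mk_rel h
  simp only [map_mul, map_inv] at this
  have h' : vρ n i * vρ n (i+1) * vρ n i * (vρ n (i+1))⁻¹ * (vρ n i)⁻¹ * (vρ n (i+1))⁻¹ = 1 :=
    this
  calc vρ n i * vρ n (i+1) * vρ n i
      = (vρ n i * vρ n (i+1) * vρ n i * (vρ n (i+1))⁻¹ * (vρ n i)⁻¹ * (vρ n (i+1))⁻¹) *
        (vρ n (i+1) * vρ n i * vρ n (i+1)) := by group
    _ = vρ n (i+1) * vρ n i * vρ n (i+1) := by rw [h']; group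

theorem mixed {i : ℕ} (h1 : 1 ≤ i) (h2 : i + 1 ≤ n - 1) :
    vρ n i * vρ n (i+1) * vσ n i = vσ n (i+1) * vρ n i * vρ n (i+1) := by
  have h : (fρ n i * fρ n (i+1) * fσ n i * (fρ n (i+1))⁻¹ * (fρ n i)⁻¹ * (fσ n (i+1))⁻¹)
      ∈ vbRels n := Or.inl (Or.inr ⟨i, h1, h2, Or.inr (Or.inr rfl)⟩)
  have := mk_rel h
  simp only [map_mul, map_inv] at this
  have h' : vρ n i * vρ n (i+1) * vσ n i * (vρ n (i+1))⁻¹ * (vρ n i)⁻¹ * (vσ n (i+1))⁻¹ = 1 :=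
    this
  calc vρ n i * vρ n (i+1) * vσ n i
      = (vρ n i * vρ n (i+1) * vσ n i * (vρ n (i+1))⁻¹ * (vρ n i)⁻¹ * (vσ n (i+1))⁻¹) *
        (vσ n (i+1) * vρ n i * vρ n (i+1)) := by group
    _ = vσ n (i+1) * vρ n i * vρ n (i+1) := by rw [h']; group

theorem ρ_sq {i : ℕ} (h1 : 1 ≤ i) (h2 : i ≤ n - 1) : vρ n i * vρ n i = 1 := by
  have h : (fρ n i * fρ n i) ∈ vbRels n := Or.inr ⟨i, h1, h2, rfl⟩
  simpa [vρ, map_mul] using mk_rel h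

theorem ρ_inv {i : ℕ} (h1 : 1 ≤ i) (h2 : i ≤ n - 1) : (vρ n i)⁻¹ = vρ n i :=
  inv_eq_of_mul_eq_one_right (ρ_sq h1 h2)

end VBAux

namespace VBAux

/-- c_l = σ_l σ_1⁻¹ -/
def cc (n l : ℕ) : VB n := vσ n l * (vσ n 1)⁻¹
/-- a = ρ_1 σ_1 ρ_1 σ_1⁻¹ -/
def aa (n : ℕ) : VB n := vρ n 1 * vσ n 1 * vρ n 1 * (vσ n 1)⁻¹
/-- C = σ_1 c_2 σ_1⁻¹ -/
def CC (n : ℕ) : VB n := vσ n 1 * cc n 2 * (vσ n 1)⁻¹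
/-- e_l = ρ_l ρ_1 -/
def ee (n l : ℕ) : VB n := vρ n l * vρ n 1
/-- d_l = ρ_1 σ_l ρ_1 σ_1⁻¹ -/
def dd (n l : ℕ) : VB n := vρ n 1 * vσ n l * vρ n 1 * (vσ n 1)⁻¹

theorem dd_one (n : ℕ) : dd n 1 = aa n := rfl

theorem cc_one (n : ℕ) : cc n 1 = 1 := mul_inv_cancel _

section helpers
variable {G : Type*} [Group G]

theorem conj_fix {x y : G} (h : x * y = y * x) : x * y * x⁻¹ = y := by
  rw [h]; group

theorem conj_fix' {x y : G} (h : x * y = y * x) : x⁻¹ * y * x = y := by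
  rw [show x⁻¹ * y * x = x⁻¹ * (y * x) from by group, ← h]; group

theorem conj_mem_mul {N : Subgroup G} {w y z : G} (hy : w * y * w⁻¹ ∈ N)
    (hz : w * z * w⁻¹ ∈ N) : w * (y * z) * w⁻¹ ∈ N := by
  have := N.mul_mem hy hz
  have e : (w * y * w⁻¹) * (w * z * w⁻¹) = w * (y * z) * w⁻¹ := by group
  rwa [e] at this

theorem conj_mem_inv {N : Subgroup G} {w y : G} (hy : w * y * w⁻¹ ∈ N) :
    w * y⁻¹ * w⁻¹ ∈ N := by
  have := N.inv_mem hy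
  have e : (w * y * w⁻¹)⁻¹ = w * y⁻¹ * w⁻¹ := by group
  rwa [e] at this

end helpers

section FactsN4

variable {n : ℕ}

local notation "s" => vσ n 1
local notation "r" => vρ n 1
local notation "σ₂" => vσ n 2
local notation "ρ₂" => vρ n 2
local notation "u₃" => vσ n 3
local notation "τ₃" => vρ n 3

-- basic squares / inverses
theorem hr2 (hn : 2 ≤ n) : r * r = 1 := ρ_sq le_rfl (by omega)
theorem hri (hn : 2 ≤ n) : r⁻¹ = r := ρ_inv le_rfl (by omega)
theorem hp2 (hn : 3 ≤ n) : ρ₂ * ρ₂ = 1 := ρ_sq (by omega) (by omega)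
theorem hpi (hn : 3 ≤ n) : ρ₂⁻¹ = ρ₂ := ρ_inv (by omega) (by omega)
theorem ht2 (hn : 4 ≤ n) : τ₃ * τ₃ = 1 := ρ_sq (by omega) (by omega)
theorem hti (hn : 4 ≤ n) : τ₃⁻¹ = τ₃ := ρ_inv (by omega) (by omega)

-- commutation instances (n ≥ 4)
theorem c_su (hn : 4 ≤ n) : s * u₃ = u₃ * s := comm_σσ le_rfl (by omega) (by omega)
theorem c_sτ (hn : 4 ≤ n) : s * τ₃ = τ₃ * s := comm_σρ le_rfl (by omega) (by omega)
theorem c_ur (hn : 4 ≤ n) : u₃ * r = r * u₃ := comm_ρσ le_rfl (by omega) (by omega)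
theorem c_rτ (hn : 4 ≤ n) : r * τ₃ = τ₃ * r := comm_ρρ le_rfl (by omega) (by omega)

-- generic commutation with letters of index ≥ 3
theorem c_sσl {l : ℕ} (h3 : 3 ≤ l) (hl : l ≤ n - 1) : s * vσ n l = vσ n l * s :=
  comm_σσ le_rfl (by omega) hl
theorem c_sρl {l : ℕ} (h3 : 3 ≤ l) (hl : l ≤ n - 1) : s * vρ n l = vρ n l * s :=
  comm_σρ le_rfl (by omega) hl
theorem c_σlr {l : ℕ} (h3 : 3 ≤ l) (hl : l ≤ n - 1) : vσ n l * r = r * vσ n l :=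
  comm_ρσ le_rfl (by omega) hl
theorem c_ρlr {l : ℕ} (h3 : 3 ≤ l) (hl : l ≤ n - 1) : r * vρ n l = vρ n l * r :=
  comm_ρρ le_rfl (by omega) hl

theorem aa_inv (hn : 2 ≤ n) : (aa n)⁻¹ = s * r * s⁻¹ * r := by
  have : (aa n)⁻¹ = s * r⁻¹ * s⁻¹ * r⁻¹ := by simp only [aa]; group
  rw [this, hri hn]

-- F5 : d_l = c_l for l ≥ 3
theorem F5 {l : ℕ} (hn : 2 ≤ n) (h3 : 3 ≤ l) (hl : l ≤ n - 1) : dd n l = cc n l := by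
  have h := c_σlr h3 hl
  calc dd n l = r * (vσ n l * r) * (vσ n 1)⁻¹ := by simp only [dd]; group
    _ = r * (r * vσ n l) * (vσ n 1)⁻¹ := by rw [h]
    _ = (r * r) * vσ n l * (vσ n 1)⁻¹ := by group
    _ = cc n l := by rw [hr2 hn]; simp only [cc]; group

-- F1a,b : conjugation of a by s
theorem F1a (hn : 4 ≤ n) : s * aa n * s⁻¹ = (cc n 3)⁻¹ * aa n * cc n 3 := by
  have hua : u₃ * aa n = aa n * u₃ := by
    have h1 : Commute u₃ r := (c_ur hn)
    have h2 : Commute u₃ s := (c_su hn).symm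
    exact (((h1.mul_right h2).mul_right h1).mul_right h2.inv_right).eq
  calc s * aa n * s⁻¹
      = s * (u₃⁻¹ * aa n * u₃) * s⁻¹ := by rw [conj_fix' hua]
    _ = (cc n 3)⁻¹ * aa n * cc n 3 := by simp only [cc]; group

theorem F1b (hn : 4 ≤ n) : s⁻¹ * aa n * s = cc n 3 * aa n * (cc n 3)⁻¹ := by
  have hua : u₃ * aa n = aa n * u₃ := by
    have h1 : Commute u₃ r := (c_ur hn)
    have h2 : Commute u₃ s := (c_su hn).symm
    exact (((h1.mul_right h2).mul_right h1).mul_right h2.inv_right).eq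
  have hsu' : s⁻¹ * u₃ = u₃ * s⁻¹ := (Commute.inv_left (c_su hn : Commute s u₃)).eq
  have hsu'' : u₃⁻¹ * s = s * u₃⁻¹ := (Commute.inv_left ((c_su hn : Commute s u₃).symm)).eq
  calc s⁻¹ * aa n * s
      = s⁻¹ * (u₃ * aa n * u₃⁻¹) * s := by rw [conj_fix hua]
    _ = (s⁻¹ * u₃) * aa n * (u₃⁻¹ * s) := by group
    _ = (u₃ * s⁻¹) * aa n * (s * u₃⁻¹) := by rw [hsu', hsu'']
    _ = cc n 3 * aa n * (cc n 3)⁻¹ := by simp only [cc]; group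

-- braid facts for index 2
theorem F2b (hn : 3 ≤ n) : s * CC n * s⁻¹ = (cc n 2)⁻¹ * CC n := by
  have hb : s * σ₂ * s = σ₂ * s * σ₂ := braid_σ le_rfl (by omega)
  have : (cc n 2)⁻¹ * CC n = s * σ₂⁻¹ * (s * σ₂ * s) * s⁻¹ * s⁻¹ * s⁻¹ := by
    simp only [CC, cc]; group
  rw [this, hb]; simp only [CC, cc]; group

theorem F2c (hn : 3 ≤ n) : s⁻¹ * cc n 2 * s = cc n 2 * (CC n)⁻¹ := by
  have hb : s * σ₂ * s = σ₂ * s * σ₂ := braid_σ le_rfl (by omega)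
  have : cc n 2 * (CC n)⁻¹ = s⁻¹ * ((s * σ₂ * s) * σ₂⁻¹ * s⁻¹) := by
    simp only [CC, cc]; group
  rw [this, hb]; simp only [cc]; group

theorem F2d : s⁻¹ * CC n * s = cc n 2 := by simp only [CC]; group

-- mixed-relation facts for e₂
theorem D1 (hn : 3 ≤ n) : s * (ρ₂ * r) = (ρ₂ * r) * σ₂ := by
  have hmix : r * ρ₂ * s = σ₂ * r * ρ₂ := mixed le_rfl (by omega)
  have hσ : σ₂ = r * ρ₂ * s * ρ₂⁻¹ * r⁻¹ := by rw [hmix]; group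
  calc s * (ρ₂ * r)
      = ρ₂ * ρ₂ * s * ρ₂ * r := by rw [hp2 hn]; group
    _ = ρ₂ * (r * r) * ρ₂ * s * ρ₂ * r := by rw [hr2 (by omega)]; group
    _ = (ρ₂ * r) * (r * ρ₂ * s * ρ₂⁻¹ * r⁻¹) := by rw [hpi hn, hri (by omega)]; group
    _ = (ρ₂ * r) * σ₂ := by rw [← hσ]

theorem D1' (hn : 3 ≤ n) : s⁻¹ * (ρ₂ * r) = (ρ₂ * r) * σ₂⁻¹ := by
  have h := D1 hn
  calc s⁻¹ * (ρ₂ * r) = s⁻¹ * ((ρ₂ * r) * σ₂) * σ₂⁻¹ := by group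
    _ = s⁻¹ * (s * (ρ₂ * r)) * σ₂⁻¹ := by rw [← h]
    _ = (ρ₂ * r) * σ₂⁻¹ := by group

theorem F3a (hn : 3 ≤ n) : s * ee n 2 * s⁻¹ = ee n 2 * cc n 2 := by
  have h := D1 hn
  calc s * ee n 2 * s⁻¹ = (s * (ρ₂ * r)) * s⁻¹ := by simp only [ee]
    _ = ((ρ₂ * r) * σ₂) * s⁻¹ := by rw [h]
    _ = ee n 2 * cc n 2 := by simp only [ee, cc]; group

theorem F3b (hn : 3 ≤ n) : s⁻¹ * ee n 2 * s = ee n 2 * (CC n * (cc n 2)⁻¹) := by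
  have h := D1' hn
  have hb : s * σ₂ * s = σ₂ * s * σ₂ := braid_σ le_rfl (by omega)
  have h2 : σ₂⁻¹ * s = CC n * (cc n 2)⁻¹ := by
    have e : CC n * (cc n 2)⁻¹ = σ₂⁻¹ * (σ₂ * s * σ₂) * s⁻¹ * σ₂⁻¹ := by
      simp only [CC, cc]; group
    rw [e, ← hb]; group
  calc s⁻¹ * ee n 2 * s = (s⁻¹ * (ρ₂ * r)) * s := by simp only [ee]
    _ = ((ρ₂ * r) * σ₂⁻¹) * s := by rw [h]
    _ = (ρ₂ * r) * (σ₂⁻¹ * s) := by group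
    _ = ee n 2 * (CC n * (cc n 2)⁻¹) := by rw [h2]; simp only [ee]

-- F4 : letters of index ≥ 3
theorem comm_s_cc {l : ℕ} (h3 : 3 ≤ l) (hl : l ≤ n - 1) : s * cc n l = cc n l * s := by
  have hc : Commute s (vσ n l) := c_sσl h3 hl
  exact (hc.mul_right (Commute.refl s).inv_right).eq

theorem F4a {l : ℕ} (h3 : 3 ≤ l) (hl : l ≤ n - 1) : s * cc n l * s⁻¹ = cc n l :=
  conj_fix (comm_s_cc h3 hl)

theorem F4b {l : ℕ} (h3 : 3 ≤ l) (hl : l ≤ n - 1) : s⁻¹ * cc n l * s = cc n l :=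
  conj_fix' (comm_s_cc h3 hl)

theorem F4c {l : ℕ} (hn : 2 ≤ n) (h3 : 3 ≤ l) (hl : l ≤ n - 1) :
    s * ee n l * s⁻¹ = ee n l * aa n := by
  have h := c_sρl h3 hl
  calc s * ee n l * s⁻¹ = (s * vρ n l) * (r * s⁻¹) := by simp only [ee]; group
    _ = (vρ n l * s) * (r * s⁻¹) := by rw [h]
    _ = vρ n l * (r * r) * (s * r * s⁻¹) := by rw [hr2 hn]; group
    _ = ee n l * aa n := by simp only [ee, aa]; group

theorem F4d {l : ℕ} (hn : 4 ≤ n) (h3 : 3 ≤ l) (hl : l ≤ n - 1) :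
    s⁻¹ * ee n l * s = ee n l * (cc n 3 * (aa n)⁻¹ * (cc n 3)⁻¹) := by
  have h := c_sρl h3 hl
  have hsrs : r * (cc n 3 * (aa n)⁻¹ * (cc n 3)⁻¹) = s⁻¹ * r * s := by
    have h1 : Commute u₃ r := (c_ur hn)
    have h2 : Commute u₃ s := (c_su hn).symm
    have hX : u₃ * (r * s⁻¹ * r * s) = (r * s⁻¹ * r * s) * u₃ :=
      (((h1.mul_right h2.inv_right).mul_right h1).mul_right h2).eq
    calc r * (cc n 3 * (aa n)⁻¹ * (cc n 3)⁻¹)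
        = r * (u₃ * (s⁻¹ * (aa n)⁻¹ * s) * u₃⁻¹) := by simp only [cc]; group
      _ = r * (u₃ * (s⁻¹ * (s * r * s⁻¹ * r) * s) * u₃⁻¹) := by rw [aa_inv (by omega)]
      _ = r * (u₃ * (r * s⁻¹ * r * s) * u₃⁻¹) := by group
      _ = r * (r * s⁻¹ * r * s) := by rw [conj_fix hX]
      _ = (r * r) * (s⁻¹ * r * s) := by group
      _ = s⁻¹ * r * s := by rw [hr2 (by omega)]; group
  calc s⁻¹ * ee n l * s = vρ n l * (s⁻¹ * r * s) := by
        rw [show s⁻¹ * ee n l * s = (s⁻¹ * vρ n l) * s * (s⁻¹ * r * s) * s⁻¹ * s from by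
          simp only [ee]; group]
        rw [show s⁻¹ * vρ n l = vρ n l * s⁻¹ from by
          have := h; rw [show vρ n l * s⁻¹ = s⁻¹ * (s * vρ n l) * s⁻¹ * s * s⁻¹ from by group,
            this]; group]
        group
    _ = vρ n l * (r * (cc n 3 * (aa n)⁻¹ * (cc n 3)⁻¹)) := by rw [hsrs]
    _ = ee n l * (cc n 3 * (aa n)⁻¹ * (cc n 3)⁻¹) := by simp only [ee]; group

-- F6 : the key n ≥ 4 formula for d₂
theorem F6 (hn : 4 ≤ n) :
    dd n 2 = τ₃ * ((ee n 2)⁻¹ * cc n 3 * ee n 2 * cc n 2) * τ₃ := by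
  have hmix2 : ρ₂ * τ₃ * σ₂ = u₃ * ρ₂ * τ₃ := mixed (by omega) (by omega)
  have hD3 : σ₂ = τ₃ * ρ₂ * u₃ * ρ₂ * τ₃ := by
    have : τ₃ * ρ₂ * (ρ₂ * τ₃ * σ₂) = σ₂ := by
      rw [show τ₃ * ρ₂ * (ρ₂ * τ₃ * σ₂) = τ₃ * (ρ₂ * ρ₂) * τ₃ * σ₂ from by group,
        hp2 (by omega)]
      rw [show τ₃ * 1 * τ₃ * σ₂ = (τ₃ * τ₃) * σ₂ from by group, ht2 hn]; group
    rw [← this, hmix2]; group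
  have hD1' := D1' (show 3 ≤ n by omega)
  have hcrτ : Commute r τ₃ := c_rτ hn
  have hcsτ : Commute s τ₃ := c_sτ hn
  have step1 : dd n 2 = τ₃ * ((r * ρ₂) * u₃ * (ρ₂ * r)) * τ₃ * s⁻¹ := by
    calc dd n 2 = r * σ₂ * r * s⁻¹ := by simp only [dd]
      _ = r * (τ₃ * ρ₂ * u₃ * ρ₂ * τ₃) * r * s⁻¹ := by rw [← hD3]
      _ = (r * τ₃) * (ρ₂ * u₃ * ρ₂) * (τ₃ * r) * s⁻¹ := by group
      _ = (τ₃ * r) * (ρ₂ * u₃ * ρ₂) * (r * τ₃) * s⁻¹ := by rw [hcrτ.eq, ← hcrτ.eq]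
      _ = τ₃ * ((r * ρ₂) * u₃ * (ρ₂ * r)) * τ₃ * s⁻¹ := by group
  have step2 : τ₃ * s⁻¹ = s⁻¹ * τ₃ := hcsτ.inv_left.eq.symm
  have inner : (r * ρ₂) * u₃ * (ρ₂ * r) * s⁻¹ = (ee n 2)⁻¹ * cc n 3 * ee n 2 * cc n 2 := by
    have he2i : (ee n 2)⁻¹ = r * ρ₂ := by
      rw [show (ee n 2)⁻¹ = r⁻¹ * ρ₂⁻¹ from by simp only [ee]; group,
        hri (by omega), hpi (by omega)]
    calc (r * ρ₂) * u₃ * (ρ₂ * r) * s⁻¹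
        = (r * ρ₂) * u₃ * (s⁻¹ * s) * (ρ₂ * r) * s⁻¹ := by group
      _ = (r * ρ₂) * u₃ * s⁻¹ * (s * (ρ₂ * r) * s⁻¹) := by group
      _ = (r * ρ₂) * u₃ * s⁻¹ * ((ρ₂ * r) * σ₂ * s⁻¹) := by
            rw [show s * (ρ₂ * r) * s⁻¹ = (s * (ρ₂ * r)) * s⁻¹ from by group, D1 (by omega)]
      _ = (ee n 2)⁻¹ * cc n 3 * ee n 2 * cc n 2 := by
            rw [he2i]; simp only [cc, ee]; group
  calc dd n 2
      = (τ₃ * ((r * ρ₂) * u₃ * (ρ₂ * r)) * τ₃) * s⁻¹ := by rw [step1]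
    _ = τ₃ * ((r * ρ₂) * u₃ * (ρ₂ * r)) * (s⁻¹ * τ₃) := by rw [← step2]; group
    _ = τ₃ * ((r * ρ₂) * u₃ * (ρ₂ * r) * s⁻¹) * τ₃ := by group
    _ = τ₃ * ((ee n 2)⁻¹ * cc n 3 * ee n 2 * cc n 2) * τ₃ := by rw [inner]

end FactsN4
end VBAux

namespace VBAux

section Memb
variable {n : ℕ}

local notation "s" => vσ n 1
local notation "r" => vρ n 1

/-- conjugators for σ generators -/
theorem sigma_conj (l : ℕ) (h1 : 1 ≤ l) (h2 : l ≤ n - 1) :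
    ∃ v : VB n, vσ n l = v * vσ n 1 * v⁻¹ := by
  induction l, h1 using Nat.le_induction with
  | base => exact ⟨1, by group⟩
  | succ l hl ih =>
      obtain ⟨v, hv⟩ := ih (by omega)
      have hm := mixed hl (show l + 1 ≤ n - 1 from h2)
      have key : vσ n (l+1) = (vρ n l * vρ n (l+1)) * vσ n l * (vρ n l * vρ n (l+1))⁻¹ := by
        rw [show (vρ n l * vρ n (l+1)) * vσ n l * (vρ n l * vρ n (l+1))⁻¹
            = (vρ n l * vρ n (l+1) * vσ n l) * (vρ n (l+1))⁻¹ * (vρ n l)⁻¹ from by group, hm]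
        group
      exact ⟨(vρ n l * vρ n (l+1)) * v, by rw [key, hv]; group⟩

/-- conjugators for ρ generators -/
theorem rho_conj (l : ℕ) (h1 : 1 ≤ l) (h2 : l ≤ n - 1) :
    ∃ z : VB n, vρ n l = z * vρ n 1 * z⁻¹ := by
  induction l, h1 using Nat.le_induction with
  | base => exact ⟨1, by group⟩
  | succ l hl ih =>
      obtain ⟨z, hz⟩ := ih (by omega)
      have hb := braid_ρ hl (show l + 1 ≤ n - 1 from h2)
      have key : vρ n (l+1) = (vρ n l * vρ n (l+1)) * vρ n l * (vρ n l * vρ n (l+1))⁻¹ := by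
        rw [show (vρ n l * vρ n (l+1)) * vρ n l * (vρ n l * vρ n (l+1))⁻¹
            = (vρ n l * vρ n (l+1) * vρ n l) * (vρ n (l+1))⁻¹ * (vρ n l)⁻¹ from by group, hb,
          ρ_inv (by omega) h2, ρ_inv hl (by omega)]
        rw [show vρ n (l+1) * vρ n l * vρ n (l+1) * vρ n (l+1) * vρ n l
            = vρ n (l+1) * vρ n l * (vρ n (l+1) * vρ n (l+1)) * vρ n l from by group,
          ρ_sq (by omega) h2]
        rw [show vρ n (l+1) * vρ n l * 1 * vρ n l = vρ n (l+1) * (vρ n l * vρ n l) from by group,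
          ρ_sq hl (by omega)]
        rw [mul_one]
      refine ⟨(vρ n l * vρ n (l+1)) * z, ?_⟩
      conv_lhs => rw [key]
      rw [hz]; group

def Xset (n : ℕ) : Set (VB n) :=
  {aa n, cc n 2, CC n, ee n 2} ∪
  (fun l => cc n l) '' Set.Icc 3 (n-1) ∪
  (fun l => ee n l) '' Set.Icc 3 (n-1) ∪
  (fun y => vρ n 3 * y * vρ n 3) '' {ee n 2, cc n 2, CC n, cc n 3}

theorem Xset_finite (n : ℕ) : (Xset n).Finite := by
  refine (((?_ : Set.Finite _).union ?_).union ?_).union ?_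
  · exact (((Set.finite_singleton _).insert _).insert _).insert _
  · exact (Set.finite_Icc _ _).image _
  · exact (Set.finite_Icc _ _).image _
  · exact ((((Set.finite_singleton _).insert _).insert _).insert _).image _

theorem mem_commutator_of_word {g h : VB n} : g * h * g⁻¹ * h⁻¹ ∈ commutator (VB n) := by
  rw [commutator_def, ← commutatorElement_def]
  exact Subgroup.commutator_mem_commutator (Subgroup.mem_top _) (Subgroup.mem_top _)

instance : (commutator (VB n)).Normal := by
  rw [commutator_def]; infer_instance

theorem aa_mem_commutator (hn : 2 ≤ n) : aa n ∈ commutator (VB n) := by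
  have e : aa n = r * s * r⁻¹ * s⁻¹ := by rw [hri hn]; rfl
  rw [e]; exact mem_commutator_of_word

theorem cc_mem_commutator {l : ℕ} (h1 : 1 ≤ l) (h2 : l ≤ n - 1) :
    cc n l ∈ commutator (VB n) := by
  obtain ⟨v, hv⟩ := sigma_conj l h1 h2
  have e : cc n l = v * s * v⁻¹ * s⁻¹ := by simp only [cc]; rw [hv]
  rw [e]; exact mem_commutator_of_word

theorem ee_mem_commutator {l : ℕ} (hn : 2 ≤ n) (h1 : 1 ≤ l) (h2 : l ≤ n - 1) :
    ee n l ∈ commutator (VB n) := by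
  obtain ⟨z, hz⟩ := rho_conj l h1 h2
  have e : ee n l = z * r * z⁻¹ * r⁻¹ := by simp only [ee]; rw [hz, hri hn]
  rw [e]; exact mem_commutator_of_word

theorem CC_mem_commutator (hn : 3 ≤ n) : CC n ∈ commutator (VB n) := by
  have := (inferInstance : (commutator (VB n)).Normal)
  exact this.conj_mem _ (cc_mem_commutator (by omega) (by omega)) s

theorem Xset_subset_commutator (hn : 4 ≤ n) : Xset n ⊆ ↑(commutator (VB n)) := by
  have hnorm := (inferInstance : (commutator (VB n)).Normal)
  intro x hx
  have τconj : ∀ y : VB n, y ∈ commutator (VB n) →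
      vρ n 3 * y * vρ n 3 ∈ commutator (VB n) := by
    intro y hy
    have e : vρ n 3 * y * vρ n 3 = vρ n 3 * y * (vρ n 3)⁻¹ := by
      rw [ρ_inv (by omega) (by omega)]
    rw [e]; exact hnorm.conj_mem _ hy _
  rcases hx with ((h | h) | h) | h
  · rcases h with rfl | rfl | rfl | rfl
    · exact aa_mem_commutator (by omega)
    · exact cc_mem_commutator (by omega) (by omega)
    · exact CC_mem_commutator (by omega)
    · exact ee_mem_commutator (by omega) (by omega) (by omega)
  · obtain ⟨l, hl, rfl⟩ := h
    rw [Set.mem_Icc] at hl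
    exact cc_mem_commutator (by omega) hl.2
  · obtain ⟨l, hl, rfl⟩ := h
    rw [Set.mem_Icc] at hl
    exact ee_mem_commutator (by omega) (by omega) hl.2
  · obtain ⟨y, hy, rfl⟩ := h
    rcases hy with rfl | rfl | rfl | rfl
    · exact τconj _ (ee_mem_commutator (by omega) (by omega) (by omega))
    · exact τconj _ (cc_mem_commutator (by omega) (by omega))
    · exact τconj _ (CC_mem_commutator (by omega))
    · exact τconj _ (cc_mem_commutator (by omega) (by omega))

end Memb
end VBAux

namespace VBAux

section Ind
variable {n : ℕ}

local notation "s" => vσ n 1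
local notation "r" => vρ n 1

theorem conj_step_up {y z : VB n} (m : ℤ) (h : s * y * s⁻¹ = z) :
    s^(m+1) * y * (s^(m+1))⁻¹ = s^m * z * (s^m)⁻¹ := by
  rw [← h, zpow_add_one]; group

theorem conj_step_down {y z : VB n} (m : ℤ) (h : s⁻¹ * y * s = z) :
    s^(m-1) * y * (s^(m-1))⁻¹ = s^m * z * (s^m)⁻¹ := by
  rw [← h, zpow_sub_one]; group

theorem conj_one_mem {N : Subgroup (VB n)} (w : VB n) : w * (1:VB n) * w⁻¹ ∈ N := by
  simp only [mul_one, mul_inv_cancel]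
  exact N.one_mem

/-- the subgroup generated by Y₁ = {e₂, c₂, C, c₃} -/
def N1 (n : ℕ) : Subgroup (VB n) :=
  Subgroup.closure {ee n 2, cc n 2, CC n, cc n 3}

theorem aux_induction (hn : 4 ≤ n) (m : ℤ) :
    s^m * ee n 2 * (s^m)⁻¹ ∈ N1 n ∧ s^m * cc n 2 * (s^m)⁻¹ ∈ N1 n ∧
    s^m * CC n * (s^m)⁻¹ ∈ N1 n ∧ s^m * cc n 3 * (s^m)⁻¹ ∈ N1 n := by
  have he : ee n 2 ∈ N1 n := Subgroup.subset_closure (by left; rfl)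
  have hc2 : cc n 2 ∈ N1 n := Subgroup.subset_closure (by right; left; rfl)
  have hC : CC n ∈ N1 n := Subgroup.subset_closure (by right; right; left; rfl)
  have hc3 : cc n 3 ∈ N1 n := Subgroup.subset_closure (by right; right; right; rfl)
  induction m using Int.induction_on with
  | zero => simpa using ⟨he, hc2, hC, hc3⟩
  | succ i ih =>
      obtain ⟨ihe, ihc2, ihC, ihc3⟩ := ih
      refine ⟨?_, ?_, ?_, ?_⟩
      · rw [conj_step_up _ (F3a (by omega))]
        exact conj_mem_mul ihe ihc2
      · rw [conj_step_up _ (rfl : s * cc n 2 * s⁻¹ = CC n)]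
        exact ihC
      · rw [conj_step_up _ (F2b (by omega))]
        exact conj_mem_mul (conj_mem_inv ihc2) ihC
      · rw [conj_step_up _ (F4a (by omega) (by omega))]
        exact ihc3
  | pred i ih =>
      obtain ⟨ihe, ihc2, ihC, ihc3⟩ := ih
      have e : (-(i:ℤ) - 1) = (-(i:ℤ)) - 1 := by ring
      rw [e]
      refine ⟨?_, ?_, ?_, ?_⟩
      · rw [conj_step_down _ (F3b (by omega))]
        exact conj_mem_mul ihe (conj_mem_mul ihC (conj_mem_inv ihc2))
      · rw [conj_step_down _ (F2c (by omega))]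
        exact conj_mem_mul ihc2 (conj_mem_inv ihC)
      · rw [conj_step_down _ (F2d)]
        exact ihc2
      · rw [conj_step_down _ (F4b (by omega) (by omega))]
        exact ihc3

/-- the main finite generating set subgroup -/
def NN (n : ℕ) : Subgroup (VB n) := Subgroup.closure (Xset n)

theorem mem_NN_of_aa (hn : 4 ≤ n) : aa n ∈ NN n :=
  Subgroup.subset_closure (Or.inl (Or.inl (Or.inl (by left; rfl))))
theorem mem_NN_of_cc2 (hn : 4 ≤ n) : cc n 2 ∈ NN n :=
  Subgroup.subset_closure (Or.inl (Or.inl (Or.inl (by right; left; rfl))))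
theorem mem_NN_of_CC (hn : 4 ≤ n) : CC n ∈ NN n :=
  Subgroup.subset_closure (Or.inl (Or.inl (Or.inl (by right; right; left; rfl))))
theorem mem_NN_of_ee2 (hn : 4 ≤ n) : ee n 2 ∈ NN n :=
  Subgroup.subset_closure (Or.inl (Or.inl (Or.inl (by right; right; right; rfl))))
theorem mem_NN_of_cc {l : ℕ} (h3 : 3 ≤ l) (hl : l ≤ n - 1) : cc n l ∈ NN n :=
  Subgroup.subset_closure (Or.inl (Or.inl (Or.inr ⟨l, Set.mem_Icc.mpr ⟨h3, hl⟩, rfl⟩)))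
theorem mem_NN_of_ee {l : ℕ} (h3 : 3 ≤ l) (hl : l ≤ n - 1) : ee n l ∈ NN n :=
  Subgroup.subset_closure (Or.inl (Or.inr ⟨l, Set.mem_Icc.mpr ⟨h3, hl⟩, rfl⟩))

theorem main_induction (hn : 4 ≤ n) (m : ℤ) :
    s^m * aa n * (s^m)⁻¹ ∈ NN n ∧ s^m * cc n 2 * (s^m)⁻¹ ∈ NN n ∧
    s^m * CC n * (s^m)⁻¹ ∈ NN n ∧ s^m * ee n 2 * (s^m)⁻¹ ∈ NN n ∧
    (∀ l, 3 ≤ l → l ≤ n - 1 →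
      s^m * cc n l * (s^m)⁻¹ ∈ NN n ∧ s^m * ee n l * (s^m)⁻¹ ∈ NN n) := by
  induction m using Int.induction_on with
  | zero =>
      simp only [zpow_zero, one_mul, inv_one, mul_one]
      exact ⟨mem_NN_of_aa hn, mem_NN_of_cc2 hn, mem_NN_of_CC hn, mem_NN_of_ee2 hn,
        fun l h3 hl => ⟨mem_NN_of_cc h3 hl, mem_NN_of_ee h3 hl⟩⟩
  | succ i ih =>
      obtain ⟨iha, ihc2, ihC, ihe2, ihl⟩ := ih
      have ihc3 := (ihl 3 le_rfl (by omega)).1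
      refine ⟨?_, ?_, ?_, ?_, ?_⟩
      · rw [conj_step_up _ (F1a hn)]
        exact conj_mem_mul (conj_mem_mul (conj_mem_inv ihc3) iha) ihc3
      · rw [conj_step_up _ (rfl : s * cc n 2 * s⁻¹ = CC n)]
        exact ihC
      · rw [conj_step_up _ (F2b (by omega))]
        exact conj_mem_mul (conj_mem_inv ihc2) ihC
      · rw [conj_step_up _ (F3a (by omega))]
        exact conj_mem_mul ihe2 ihc2
      · intro l h3 hl
        constructor
        · rw [conj_step_up _ (F4a h3 hl)]
          exact (ihl l h3 hl).1
        · rw [conj_step_up _ (F4c (by omega) h3 hl)]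
          exact conj_mem_mul (ihl l h3 hl).2 iha
  | pred i ih =>
      obtain ⟨iha, ihc2, ihC, ihe2, ihl⟩ := ih
      have ihc3 := (ihl 3 le_rfl (by omega)).1
      have e : (-(i:ℤ) - 1) = (-(i:ℤ)) - 1 := by ring
      rw [e]
      refine ⟨?_, ?_, ?_, ?_, ?_⟩
      · rw [conj_step_down _ (F1b hn)]
        exact conj_mem_mul (conj_mem_mul ihc3 iha) (conj_mem_inv ihc3)
      · rw [conj_step_down _ (F2c (by omega))]
        exact conj_mem_mul ihc2 (conj_mem_inv ihC)
      · rw [conj_step_down _ (F2d)]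
        exact ihc2
      · rw [conj_step_down _ (F3b (by omega))]
        exact conj_mem_mul ihe2 (conj_mem_mul ihC (conj_mem_inv ihc2))
      · intro l h3 hl
        constructor
        · rw [conj_step_down _ (F4b h3 hl)]
          exact (ihl l h3 hl).1
        · rw [conj_step_down _ (F4d hn h3 hl)]
          exact conj_mem_mul (ihl l h3 hl).2
            (conj_mem_mul (conj_mem_mul ihc3 (conj_mem_inv iha)) (conj_mem_inv ihc3))

theorem tau_conj_mem (hn : 4 ≤ n) {z : VB n} (hz : z ∈ N1 n) :
    vρ n 3 * z * vρ n 3 ∈ NN n := by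
  have e : vρ n 3 * z * vρ n 3 = (MulAut.conj (vρ n 3)) z := by
    rw [MulAut.conj_apply, ρ_inv (by omega) (by omega)]
  rw [e]
  have h1 : (N1 n).map (MulAut.conj (vρ n 3)).toMonoidHom ≤ NN n := by
    rw [N1, MonoidHom.map_closure]
    apply Subgroup.closure_le _ |>.mpr
    rintro x ⟨y, hy, rfl⟩
    have ey : (MulAut.conj (vρ n 3)).toMonoidHom y = vρ n 3 * y * vρ n 3 := by
      simp only [MulEquiv.coe_toMonoidHom, MulAut.conj_apply]
      rw [ρ_inv (by omega) (by omega)]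
    rw [ey]
    apply Subgroup.subset_closure
    rcases hy with rfl | rfl | rfl | rfl
    · exact Or.inr ⟨ee n 2, by left; rfl, rfl⟩
    · exact Or.inr ⟨cc n 2, by right; left; rfl, rfl⟩
    · exact Or.inr ⟨CC n, by right; right; left; rfl, rfl⟩
    · exact Or.inr ⟨cc n 3, by right; right; right; rfl, rfl⟩
  exact h1 (Subgroup.mem_map_of_mem _ hz)

theorem d2_conj_mem (hn : 4 ≤ n) (m : ℤ) : s^m * dd n 2 * (s^m)⁻¹ ∈ NN n := by
  obtain ⟨ihe, ihc2, ihC, ihc3⟩ := aux_induction hn m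
  have hw : s^m * ((ee n 2)⁻¹ * cc n 3 * ee n 2 * cc n 2) * (s^m)⁻¹ ∈ N1 n :=
    conj_mem_mul (conj_mem_mul (conj_mem_mul (conj_mem_inv ihe) ihc3) ihe) ihc2
  have hc0 : Commute s (vρ n 3) := c_sτ hn
  have hc : Commute (s^m) (vρ n 3) := hc0.zpow_left m
  have key : s^m * dd n 2 * (s^m)⁻¹
      = vρ n 3 * (s^m * ((ee n 2)⁻¹ * cc n 3 * ee n 2 * cc n 2) * (s^m)⁻¹) * vρ n 3 := by
    rw [F6 hn]
    calc s^m * (vρ n 3 * ((ee n 2)⁻¹ * cc n 3 * ee n 2 * cc n 2) * vρ n 3) * (s^m)⁻¹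
        = (s^m * vρ n 3) * ((ee n 2)⁻¹ * cc n 3 * ee n 2 * cc n 2) * (vρ n 3 * (s^m)⁻¹) := by
          group
      _ = (vρ n 3 * s^m) * ((ee n 2)⁻¹ * cc n 3 * ee n 2 * cc n 2) * ((s^m)⁻¹ * vρ n 3) := by
          rw [hc.eq, (hc.inv_left.eq).symm]
      _ = vρ n 3 * (s^m * ((ee n 2)⁻¹ * cc n 3 * ee n 2 * cc n 2) * (s^m)⁻¹) * vρ n 3 := by
          group
  rw [key]
  exact tau_conj_mem hn hw

end Ind
end VBAux

namespace VBAux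

abbrev AbT : Type := Multiplicative ℤ × Multiplicative (ZMod 2)

def θf (n : ℕ) : VBGen n → AbT :=
  Sum.elim (fun _ => (Multiplicative.ofAdd 1, 1)) (fun _ => (1, Multiplicative.ofAdd 1))

section Theta
variable {n : ℕ}

theorem lift_fσ {i : ℕ} (h1 : 1 ≤ i) (h2 : i ≤ n - 1) :
    FreeGroup.lift (θf n) (fσ n i) = ((Multiplicative.ofAdd 1, 1) : AbT) := by
  rw [fσ, dif_pos ⟨h1, by omega⟩, FreeGroup.lift_apply_of]; rfl

theorem lift_fρ {i : ℕ} (h1 : 1 ≤ i) (h2 : i ≤ n - 1) :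
    FreeGroup.lift (θf n) (fρ n i) = ((1, Multiplicative.ofAdd 1) : AbT) := by
  rw [fρ, dif_pos ⟨h1, by omega⟩, FreeGroup.lift_apply_of]; rfl

theorem θrels (n : ℕ) : ∀ r ∈ vbRels n, FreeGroup.lift (θf n) r = 1 := by
  have hfin : ∀ p : AbT, p.1 = 1 → p.2 = 1 → p = 1 := fun p h1 h2 => Prod.ext h1 h2
  rintro w ((⟨i, j, h1, h2, h3, (rfl | rfl | rfl | rfl)⟩ |
    ⟨i, h1, h2, (rfl | rfl | rfl)⟩) | ⟨i, h1, h2, rfl⟩) <;>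
    simp only [map_mul, map_inv] <;>
    [ (rw [lift_fσ (show 1 ≤ i by omega) (show i ≤ n - 1 by omega),
        lift_fσ (show 1 ≤ j by omega) (show j ≤ n - 1 by omega)]);
      (rw [lift_fρ (show 1 ≤ i by omega) (show i ≤ n - 1 by omega),
        lift_fρ (show 1 ≤ j by omega) (show j ≤ n - 1 by omega)]);
      (rw [lift_fσ (show 1 ≤ i by omega) (show i ≤ n - 1 by omega),
        lift_fρ (show 1 ≤ j by omega) (show j ≤ n - 1 by omega)]);
      (rw [lift_fσ (show 1 ≤ j by omega) (show j ≤ n - 1 by omega),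
        lift_fρ (show 1 ≤ i by omega) (show i ≤ n - 1 by omega)]);
      (rw [lift_fσ (show 1 ≤ i by omega) (show i ≤ n - 1 by omega),
        lift_fσ (show 1 ≤ i + 1 by omega) (show i + 1 ≤ n - 1 by omega)]);
      (rw [lift_fρ (show 1 ≤ i by omega) (show i ≤ n - 1 by omega),
        lift_fρ (show 1 ≤ i + 1 by omega) (show i + 1 ≤ n - 1 by omega)]);
      (rw [lift_fσ (show 1 ≤ i by omega) (show i ≤ n - 1 by omega),
        lift_fσ (show 1 ≤ i + 1 by omega) (show i + 1 ≤ n - 1 by omega),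
        lift_fρ (show 1 ≤ i by omega) (show i ≤ n - 1 by omega),
        lift_fρ (show 1 ≤ i + 1 by omega) (show i + 1 ≤ n - 1 by omega)]);
      (rw [lift_fρ (show 1 ≤ i by omega) (show i ≤ n - 1 by omega)])] <;>
    · refine Prod.ext ?_ ?_ <;>
        simp only [Prod.fst_mul, Prod.snd_mul, Prod.fst_inv, Prod.snd_inv, Prod.fst_one,
          Prod.snd_one]
      · group
      · decide

def θhom (n : ℕ) : VB n →* AbT := PresentedGroup.toGroup (θrels n)

theorem θ_mk (w : FreeGroup (VBGen n)) :
    θhom n (PresentedGroup.mk (vbRels n) w) = FreeGroup.lift (θf n) w := rfl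

def TT (n : ℕ) : AbT → VB n :=
  fun p => (vσ n 1) ^ (p.1.toAdd) * (vρ n 1) ^ (p.2.toAdd.val)

theorem TT_one : TT n 1 = 1 := by
  simp [TT]

theorem π_inl (i : Fin (n - 1)) :
    PresentedGroup.mk (vbRels n) (FreeGroup.of (Sum.inl i)) = vσ n (i.val + 1) := by
  rw [vσ, fσ, dif_pos ⟨by omega, by simpa using i.isLt⟩]
  have e : (⟨i.val + 1 - 1, by simpa using i.isLt⟩ : Fin (n-1)) = i := by
    apply Fin.ext; simp
  rw [e]
theorem π_inr (i : Fin (n - 1)) :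
    PresentedGroup.mk (vbRels n) (FreeGroup.of (Sum.inr i)) = vρ n (i.val + 1) := by
  rw [vρ, fρ, dif_pos ⟨by omega, by simpa using i.isLt⟩]
  have e : (⟨i.val + 1 - 1, by simpa using i.isLt⟩ : Fin (n-1)) = i := by
    apply Fin.ext; simp
  rw [e]

end Theta
end VBAux

namespace VBAux

section Final4
variable {n : ℕ}

local notation "s" => vσ n 1
local notation "r" => vρ n 1

theorem cc_conj_mem (hn : 4 ≤ n) {l : ℕ} (h1 : 1 ≤ l) (h2 : l ≤ n - 1) (m : ℤ) :
    s^m * cc n l * (s^m)⁻¹ ∈ NN n := by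
  have hd : l = 1 ∨ l = 2 ∨ 3 ≤ l := by omega
  rcases hd with rfl | rfl | h3
  · rw [cc_one]; exact conj_one_mem _
  · exact (main_induction hn m).2.1
  · exact ((main_induction hn m).2.2.2.2 l h3 h2).1

theorem ee_conj_mem (hn : 4 ≤ n) {l : ℕ} (h1 : 1 ≤ l) (h2 : l ≤ n - 1) (m : ℤ) :
    s^m * ee n l * (s^m)⁻¹ ∈ NN n := by
  have hd : l = 1 ∨ l = 2 ∨ 3 ≤ l := by omega
  rcases hd with rfl | rfl | h3
  · rw [show ee n 1 = 1 from ρ_sq le_rfl (by omega)]; exact conj_one_mem _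
  · exact (main_induction hn m).2.2.2.1
  · exact ((main_induction hn m).2.2.2.2 l h3 h2).2

theorem dd_conj_mem (hn : 4 ≤ n) {l : ℕ} (h1 : 1 ≤ l) (h2 : l ≤ n - 1) (m : ℤ) :
    s^m * dd n l * (s^m)⁻¹ ∈ NN n := by
  have hd : l = 1 ∨ l = 2 ∨ 3 ≤ l := by omega
  rcases hd with rfl | rfl | h3
  · rw [dd_one]; exact (main_induction hn m).1
  · exact d2_conj_mem hn m
  · rw [F5 (by omega) h3 h2]; exact cc_conj_mem hn (by omega) h2 m

theorem θ_vσ {l : ℕ} (h1 : 1 ≤ l) (h2 : l ≤ n - 1) :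
    θhom n (vσ n l) = ((Multiplicative.ofAdd 1, 1) : AbT) := by
  show θhom n (PresentedGroup.mk (vbRels n) (fσ n l)) = _
  rw [θ_mk, lift_fσ h1 h2]

theorem θ_vρ {l : ℕ} (h1 : 1 ≤ l) (h2 : l ≤ n - 1) :
    θhom n (vρ n l) = ((1, Multiplicative.ofAdd 1) : AbT) := by
  show θhom n (PresentedGroup.mk (vbRels n) (fρ n l)) = _
  rw [θ_mk, lift_fρ h1 h2]

theorem ee_inv {l : ℕ} (hn : 2 ≤ n) (h1 : 1 ≤ l) (h2 : l ≤ n - 1) :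
    (ee n l)⁻¹ = r * vρ n l := by
  rw [ee, mul_inv_rev, hri hn, ρ_inv h1 h2]

theorem schreier_W_sub (hn : 4 ≤ n) :
    {x : VB n | ∃ (p : AbT) (g : VBGen n),
      x = TT n p * (PresentedGroup.mk (vbRels n)) (FreeGroup.of g) *
        (TT n (p * θhom n ((PresentedGroup.mk (vbRels n)) (FreeGroup.of g))))⁻¹}
      ⊆ ↑(NN n) := by
  rintro x ⟨⟨P1, P2⟩, g, rfl⟩
  set m := P1.toAdd with hm
  cases g with
  | inl i =>
      have hl1 : 1 ≤ i.val + 1 := by omega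
      have hl2 : i.val + 1 ≤ n - 1 := by have := i.isLt; omega
      rw [π_inl i, θ_vσ hl1 hl2]
      have hmul : ((P1, P2) : AbT) * (Multiplicative.ofAdd 1, 1)
          = (P1 * Multiplicative.ofAdd 1, P2) := by
        refine Prod.ext ?_ ?_ <;> simp
      rw [hmul]
      have h1 : (P1 * Multiplicative.ofAdd 1).toAdd = m + 1 := by simp [hm]
      rcases (by decide : ∀ z : ZMod 2, z = 0 ∨ z = 1) P2.toAdd with hz | hz
      · have e : TT n (P1, P2) * vσ n (i.val + 1) * (TT n (P1 * Multiplicative.ofAdd 1, P2))⁻¹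
            = s^m * cc n (i.val + 1) * (s^m)⁻¹ := by
          simp only [TT, hz, h1, ZMod.val_zero, pow_zero, mul_one, cc, ← hm]
          rw [zpow_add_one]; group
        rw [e]; exact cc_conj_mem hn hl1 hl2 m
      · have e : TT n (P1, P2) * vσ n (i.val + 1) * (TT n (P1 * Multiplicative.ofAdd 1, P2))⁻¹
            = s^m * dd n (i.val + 1) * (s^m)⁻¹ := by
          simp only [TT, hz, h1, ZMod.val_one, pow_one, dd, mul_inv_rev, ← hm]
          rw [hri (by omega), zpow_add_one]; group
        rw [e]; exact dd_conj_mem hn hl1 hl2 m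
  | inr i =>
      have hl1 : 1 ≤ i.val + 1 := by omega
      have hl2 : i.val + 1 ≤ n - 1 := by have := i.isLt; omega
      rw [π_inr i, θ_vρ hl1 hl2]
      have hmul : ((P1, P2) : AbT) * (1, Multiplicative.ofAdd 1)
          = (P1, P2 * Multiplicative.ofAdd 1) := by
        refine Prod.ext ?_ ?_ <;> simp
      rw [hmul]
      have h1 : (P2 * Multiplicative.ofAdd 1).toAdd = P2.toAdd + 1 := by simp
      rcases (by decide : ∀ z : ZMod 2, z = 0 ∨ z = 1) P2.toAdd with hz | hz
      · have e : TT n (P1, P2) * vρ n (i.val + 1) * (TT n (P1, P2 * Multiplicative.ofAdd 1))⁻¹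
            = s^m * ee n (i.val + 1) * (s^m)⁻¹ := by
          simp only [TT, hz, h1, ← hm]
          rw [show ((0 : ZMod 2) + 1) = 1 from by decide]
          simp only [ZMod.val_zero, ZMod.val_one, pow_zero, pow_one, mul_one, mul_inv_rev]
          rw [hri (by omega), ee]; group
        rw [e]; exact ee_conj_mem hn hl1 hl2 m
      · have e : TT n (P1, P2) * vρ n (i.val + 1) * (TT n (P1, P2 * Multiplicative.ofAdd 1))⁻¹
            = s^m * (ee n (i.val + 1))⁻¹ * (s^m)⁻¹ := by
          simp only [TT, hz, h1, ← hm]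
          rw [show ((1 : ZMod 2) + 1) = 0 from by decide]
          simp only [ZMod.val_zero, ZMod.val_one, pow_zero, pow_one, mul_one]
          rw [ee_inv (by omega) hl1 hl2]; group
        rw [e]; exact conj_mem_inv (ee_conj_mem hn hl1 hl2 m)

theorem commutator_eq_NN (hn : 4 ≤ n) : commutator (VB n) = NN n := by
  apply le_antisymm
  · have h1 : commutator (VB n) ≤ (θhom n).ker := Abelianization.commutator_subset_ker _
    have h2 := schreier_ker_le (PresentedGroup.mk (vbRels n))
      (PresentedGroup.mk_surjective (vbRels n)) (θhom n) (TT n) TT_one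
    exact le_trans h1 (le_trans h2 ((Subgroup.closure_le _).mpr (schreier_W_sub hn)))
  · exact (Subgroup.closure_le _).mpr (Xset_subset_commutator hn)

theorem fg_of_four_le (hn : 4 ≤ n) : (commutator (VB n)).FG := by
  rw [commutator_eq_NN hn]
  exact (Subgroup.fg_iff _).mpr ⟨Xset n, rfl, Xset_finite n⟩

end Final4
end VBAux

namespace VBAux

/-! ### The lamplighter quotient, for `n ≤ 3` -/

noncomputable section

open scoped commutatorElement

abbrev LampN : Type := Multiplicative (ℤ →₀ ZMod 2)

def addShift : AddAut (ℤ →₀ ZMod 2) := Finsupp.domCongr (Equiv.addRight (1:ℤ))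

def lampAut : MulAut LampN := AddEquiv.toMultiplicative addShift

def lampφ : Multiplicative ℤ →* MulAut LampN := zpowersHom _ lampAut

abbrev Lamp : Type := LampN ⋊[lampφ] Multiplicative ℤ

def tL : Lamp := SemidirectProduct.inr (Multiplicative.ofAdd 1)
def aL : Lamp := SemidirectProduct.inl (Multiplicative.ofAdd (Finsupp.single 0 1))

theorem lampAut_apply (v : ℤ →₀ ZMod 2) :
    lampAut (Multiplicative.ofAdd v) = Multiplicative.ofAdd (addShift v) := rfl

theorem addShift_single (j : ℤ) (c : ZMod 2) :
    addShift (Finsupp.single j c) = Finsupp.single (j + 1) c := by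
  rw [addShift, Finsupp.domCongr_apply, Finsupp.equivMapDomain_single, Equiv.coe_addRight]

theorem lampAut_symm_single (j : ℤ) (c : ZMod 2) :
    lampAut⁻¹ (Multiplicative.ofAdd (Finsupp.single j c))
      = Multiplicative.ofAdd (Finsupp.single (j - 1) c) := by
  have : lampAut (Multiplicative.ofAdd (Finsupp.single (j-1) c))
      = Multiplicative.ofAdd (Finsupp.single j c) := by
    rw [lampAut_apply, addShift_single]
    norm_num
  calc lampAut⁻¹ (Multiplicative.ofAdd (Finsupp.single j c))
      = lampAut⁻¹ (lampAut (Multiplicative.ofAdd (Finsupp.single (j-1) c))) := by rw [this]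
    _ = Multiplicative.ofAdd (Finsupp.single (j - 1) c) := by
        rw [← MulAut.mul_apply, inv_mul_cancel, MulAut.one_apply]

theorem lampAut_zpow_single (k : ℤ) : ∀ j : ℤ,
    (lampAut ^ k) (Multiplicative.ofAdd (Finsupp.single j (1 : ZMod 2)))
      = Multiplicative.ofAdd (Finsupp.single (j + k) 1) := by
  induction k using Int.induction_on with
  | zero => simp
  | succ i ih =>
      intro j
      rw [zpow_add_one, MulAut.mul_apply, lampAut_apply, addShift_single, ih (j+1)]
      congr 2
      ring
  | pred i ih =>
      intro j
      rw [show (-(i:ℤ) - 1 : ℤ) = (-(i:ℤ)) - 1 from by ring, zpow_sub_one, MulAut.mul_apply,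
        lampAut_symm_single, ih (j-1)]
      congr 2
      ring

theorem ofAdd_one_zpow (k : ℤ) :
    (Multiplicative.ofAdd (1:ℤ)) ^ k = Multiplicative.ofAdd k := by
  rw [← ofAdd_zsmul]
  norm_num

theorem tL_zpow (k : ℤ) : tL ^ k = SemidirectProduct.inr (Multiplicative.ofAdd k) := by
  rw [tL, ← ofAdd_one_zpow k]
  exact (map_zpow (SemidirectProduct.inr : Multiplicative ℤ →* Lamp) (Multiplicative.ofAdd (1:ℤ)) k).symm

theorem aL_sq : aL * aL = 1 := by
  rw [aL, ← map_mul, ← ofAdd_add, ← Finsupp.single_add,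
    show ((1:ZMod 2) + 1) = 0 from by decide, Finsupp.single_zero, ofAdd_zero, map_one]

theorem commutator_tL_aL (k : ℤ) :
    ⁅tL ^ k, aL⁆ = SemidirectProduct.inl
      (Multiplicative.ofAdd (Finsupp.single k (1 : ZMod 2)) *
        (Multiplicative.ofAdd (Finsupp.single 0 (1 : ZMod 2)))⁻¹) := by
  have h2 : lampφ (Multiplicative.ofAdd k) = lampAut ^ k := by
    rw [lampφ, zpowersHom_apply]
    norm_num
  have h1 : tL ^ k * aL * (tL ^ k)⁻¹
      = SemidirectProduct.inl ((lampAut ^ k)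
          (Multiplicative.ofAdd (Finsupp.single 0 1))) := by
    rw [tL_zpow, aL, ← map_inv, ← h2]
    exact (SemidirectProduct.inl_aut _ _).symm
  calc ⁅tL ^ k, aL⁆
      = (tL ^ k * aL * (tL ^ k)⁻¹) * aL⁻¹ := rfl
    _ = SemidirectProduct.inl ((lampAut ^ k) (Multiplicative.ofAdd (Finsupp.single 0 1))) *
        SemidirectProduct.inl ((Multiplicative.ofAdd (Finsupp.single 0 1))⁻¹) := by
          rw [h1, aL, ← map_inv]
    _ = SemidirectProduct.inl (Multiplicative.ofAdd (Finsupp.single ((0:ℤ)+k) 1) *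
        (Multiplicative.ofAdd (Finsupp.single 0 1))⁻¹) := by
          rw [lampAut_zpow_single k 0, ← map_mul]
    _ = _ := by rw [zero_add]

/-- the homomorphism `VB n → Lamp`, for `n ≤ 3` -/
def ψf (n : ℕ) : VBGen n → Lamp := Sum.elim (fun _ => tL) (fun _ => aL)

section Lamp3
variable {n : ℕ}

theorem liftL_fσ {i : ℕ} (h1 : 1 ≤ i) (h2 : i ≤ n - 1) :
    FreeGroup.lift (ψf n) (fσ n i) = tL := by
  rw [fσ, dif_pos ⟨h1, by omega⟩, FreeGroup.lift_apply_of]; rfl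

theorem liftL_fρ {i : ℕ} (h1 : 1 ≤ i) (h2 : i ≤ n - 1) :
    FreeGroup.lift (ψf n) (fρ n i) = aL := by
  rw [fρ, dif_pos ⟨h1, by omega⟩, FreeGroup.lift_apply_of]; rfl

theorem ψrels (hn3 : n ≤ 3) : ∀ r ∈ vbRels n, FreeGroup.lift (ψf n) r = 1 := by
  rintro w ((⟨i, j, h1, h2, h3, hcase⟩ | ⟨i, h1, h2, (rfl | rfl | rfl)⟩) | ⟨i, h1, h2, rfl⟩)
  · exfalso; omega
  · simp only [map_mul, map_inv,
      liftL_fσ (show 1 ≤ i by omega) (show i ≤ n - 1 by omega),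
      liftL_fσ (show 1 ≤ i + 1 by omega) (show i + 1 ≤ n - 1 by omega)]
    group
  · simp only [map_mul, map_inv,
      liftL_fρ (show 1 ≤ i by omega) (show i ≤ n - 1 by omega),
      liftL_fρ (show 1 ≤ i + 1 by omega) (show i + 1 ≤ n - 1 by omega)]
    group
  · simp only [map_mul, map_inv,
      liftL_fρ (show 1 ≤ i by omega) (show i ≤ n - 1 by omega),
      liftL_fρ (show 1 ≤ i + 1 by omega) (show i + 1 ≤ n - 1 by omega),
      liftL_fσ (show 1 ≤ i by omega) (show i ≤ n - 1 by omega),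
      liftL_fσ (show 1 ≤ i + 1 by omega) (show i + 1 ≤ n - 1 by omega)]
    rw [show aL * aL * tL * aL⁻¹ * aL⁻¹ * tL⁻¹ = (aL * aL) * tL * (aL * aL)⁻¹ * tL⁻¹ from by
      group, aL_sq]
    group
  · simp only [map_mul, liftL_fρ (show 1 ≤ i by omega) (show i ≤ n - 1 by omega)]
    exact aL_sq

def ψhom (hn3 : n ≤ 3) : VB n →* Lamp := PresentedGroup.toGroup (ψrels hn3)

theorem ψ_mk (hn3 : n ≤ 3) (w : FreeGroup (VBGen n)) :
    ψhom hn3 (PresentedGroup.mk (vbRels n) w) = FreeGroup.lift (ψf n) w := rfl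

theorem ψ_vσ (hn3 : n ≤ 3) {l : ℕ} (h1 : 1 ≤ l) (h2 : l ≤ n - 1) :
    ψhom hn3 (vσ n l) = tL := by
  show ψhom hn3 (PresentedGroup.mk (vbRels n) (fσ n l)) = tL
  rw [ψ_mk, liftL_fσ h1 h2]

theorem ψ_vρ (hn3 : n ≤ 3) {l : ℕ} (h1 : 1 ≤ l) (h2 : l ≤ n - 1) :
    ψhom hn3 (vρ n l) = aL := by
  show ψhom hn3 (PresentedGroup.mk (vbRels n) (fρ n l)) = aL
  rw [ψ_mk, liftL_fρ h1 h2]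

/-- the subgroup of the lamplighter of elements with trivial ℤ-part and support inside `B` -/
def SB (B : Set ℤ) : Subgroup Lamp where
  carrier := {x | x.right = 1 ∧ ∀ q : ℤ, Multiplicative.toAdd x.left q ≠ 0 → q ∈ B}
  one_mem' := by
    constructor
    · exact SemidirectProduct.one_right
    · intro q hq
      exfalso; apply hq
      rw [SemidirectProduct.one_left]
      rfl
  mul_mem' := by
    rintro x y ⟨hx1, hx2⟩ ⟨hy1, hy2⟩
    constructor
    · rw [SemidirectProduct.mul_right, hx1, hy1, mul_one]
    · intro q hq
      rw [SemidirectProduct.mul_left, hx1, map_one, MulAut.one_apply] at hq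
      rw [toAdd_mul, Finsupp.add_apply] at hq
      by_cases h : Multiplicative.toAdd x.left q = 0
      · exact hy2 q (by rw [h, zero_add] at hq; exact hq)
      · exact hx2 q h
  inv_mem' := by
    rintro x ⟨hx1, hx2⟩
    constructor
    · rw [SemidirectProduct.inv_right, hx1, inv_one]
    · intro q hq
      rw [SemidirectProduct.inv_left, hx1, inv_one, map_one, MulAut.one_apply] at hq
      rw [toAdd_inv, Finsupp.neg_apply] at hq
      exact hx2 q (by intro h; rw [h] at hq; exact hq (neg_zero))

theorem not_fg_of_le_three (hn2 : 2 ≤ n) (hn3 : n ≤ 3) : ¬ (commutator (VB n)).FG := by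
  intro hFG
  obtain ⟨S, hS⟩ := hFG
  classical
  set T : Finset Lamp := S.image (ψhom hn3) with hT
  have hmap : Subgroup.map (ψhom hn3) (commutator (VB n)) = Subgroup.closure ↑T := by
    rw [← hS, MonoidHom.map_closure, hT, Finset.coe_image]
  set B : Set ℤ := ⋃ x ∈ (T : Set Lamp), {q : ℤ | Multiplicative.toAdd x.left q ≠ 0} with hB
  have hBfin : B.Finite :=
    Set.Finite.biUnion T.finite_toSet
      (fun x _ => (Multiplicative.toAdd x.left).finite_support)
  have hcommker : commutator (VB n) ≤
      (SemidirectProduct.rightHom.comp (ψhom hn3)).ker :=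
    Abelianization.commutator_subset_ker _
  have hTB : (T : Set Lamp) ⊆ ↑(SB B) := by
    intro x hx
    obtain ⟨g, hg, rfl⟩ := Finset.mem_image.mp hx
    constructor
    · have hgc : g ∈ commutator (VB n) := by rw [← hS]; exact Subgroup.subset_closure hg
      have := hcommker hgc
      rw [MonoidHom.mem_ker, MonoidHom.comp_apply] at this
      exact this
    · intro q hq
      rw [hB]
      refine Set.mem_biUnion ?_ hq
      exact Finset.mem_coe.mpr hx
  have hJB : Subgroup.closure (T : Set Lamp) ≤ SB B := (Subgroup.closure_le _).mpr hTB
  obtain ⟨k, hk⟩ : ∃ k : ℤ, k ∈ (B ∪ {0})ᶜ := by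
    have : (B ∪ {0} : Set ℤ).Finite := hBfin.union (Set.finite_singleton 0)
    exact this.infinite_compl.nonempty
  have hk0 : k ≠ 0 := by intro h; exact hk (Or.inr (by simp [h]))
  have hkB : k ∉ B := fun h => hk (Or.inl h)
  have hcmem : ⁅(vσ n 1)^k, vρ n 1⁆ ∈ commutator (VB n) := by
    rw [commutator_def]
    exact Subgroup.commutator_mem_commutator (Subgroup.mem_top _) (Subgroup.mem_top _)
  have hwk : ψhom hn3 ⁅(vσ n 1)^k, vρ n 1⁆ ∈ Subgroup.closure (T : Set Lamp) := by
    rw [← hmap]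
    exact Subgroup.mem_map_of_mem _ hcmem
  have hval : ψhom hn3 ⁅(vσ n 1)^k, vρ n 1⁆
      = SemidirectProduct.inl (Multiplicative.ofAdd (Finsupp.single k 1) *
          (Multiplicative.ofAdd (Finsupp.single 0 1))⁻¹) := by
    rw [map_commutatorElement, map_zpow, ψ_vσ hn3 le_rfl (by omega),
      ψ_vρ hn3 le_rfl (by omega), commutator_tL_aL]
  have hmem := hJB hwk
  rw [hval] at hmem
  obtain ⟨-, hsupp⟩ := hmem
  apply hkB
  apply hsupp k
  rw [SemidirectProduct.left_inl, toAdd_mul, toAdd_inv, toAdd_ofAdd, toAdd_ofAdd,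
    Finsupp.add_apply, Finsupp.neg_apply, Finsupp.single_eq_same,
    Finsupp.single_eq_of_ne (show k ≠ (0:ℤ) from hk0)]
  decide

end Lamp3
end
end VBAux


/-- For `n ≥ 2`, the commutator subgroup `VB_n'` is finitely
generated if and only if `n ≥ 4`. -/
theorem VB_commutator_fg_iff (n : ℕ) (hn : 2 ≤ n) :
    (commutator (VB n)).FG ↔ 4 ≤ n := by
  constructor
  · intro h
    by_contra hlt
    exact VBAux.not_fg_of_le_three hn (by omega) h
  · exact fun h4 => VBAux.fg_of_four_le h4
end

section
/- There exists a surjective group homomorphism φ from the commutator subgroup VB_3' of VB_3 onto the free group FreeGroup ℤ of countably infinite rank such that φ(a_m) is the free generator indexed by m for every m ∈ ℤ, and the kernel of φ is the normal closure in VB_3' of the set {f_m : m ∈ ℤ}. -/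
section VB3Aux
open SemidirectProduct Multiplicative
abbrev FZ := FreeGroup ℤ
def shiftA : FZ ≃* FZ := FreeGroup.freeGroupCongr (Equiv.addRight (1:ℤ))
def actZ : Multiplicative ℤ →* MulAut FZ := zpowersHom _ shiftA
abbrev RR := FZ ⋊[actZ] Multiplicative ℤ
lemma shiftA_inv (m : ℤ) : shiftA⁻¹ (FreeGroup.of m) = FreeGroup.of (m - 1) := by
  have : shiftA (FreeGroup.of (m-1)) = FreeGroup.of m := by simp [shiftA]
  rw [← this]; exact shiftA.symm_apply_apply _
lemma shiftA_pow (g m : ℤ) : (shiftA ^ g) (FreeGroup.of m) = FreeGroup.of (m + g) := by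
  induction g using Int.induction_on generalizing m with
  | zero => simp
  | succ k ih =>
    rw [zpow_add_one, MulAut.mul_apply, show ((shiftA : MulAut FZ) (FreeGroup.of m)) = FreeGroup.of (m+1) by simp [shiftA], ih]
    ring_nf
  | pred k ih =>
    rw [zpow_sub_one, MulAut.mul_apply, show ((shiftA : MulAut FZ)⁻¹ (FreeGroup.of m)) = FreeGroup.of (m-1) from shiftA_inv m, ih]
    ring_nf
lemma actZ_of (g m : ℤ) : actZ (ofAdd g) (FreeGroup.of m) = FreeGroup.of (m + g) := by
  simp only [actZ, zpowersHom_apply, toAdd_ofAdd]; exact shiftA_pow g m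
lemma ofAdd_zpow (m : ℤ) : (ofAdd (1:ℤ)) ^ m = ofAdd m := by
  rw [← ofAdd_zsmul]; norm_num
def Vr : RR := inl (FreeGroup.of 0) * inr (ofAdd 1)
def Sr : RR := inr (ofAdd (1:ℤ))
lemma Sr_zpow (m : ℤ) : Sr ^ m = inr (ofAdd m) := by
  rw [Sr, ← map_zpow, ofAdd_zpow]
lemma Vr_right (m : ℤ) : (Vr ^ m).right = ofAdd m := by
  have h : ∀ x : RR, x.right = rightHom x := fun _ => rfl
  rw [h, map_zpow, show rightHom Vr = ofAdd 1 by simp [Vr], ofAdd_zpow]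
def wF (m : ℤ) : FZ := (Vr ^ m * (inr (ofAdd m))⁻¹).left
lemma Vr_zpow (m : ℤ) : Vr ^ m = inl (wF m) * inr (ofAdd m) := by
  have h : Vr ^ m * (inr (ofAdd m))⁻¹ = inl (wF m) := by
    have h1 := inl_left_mul_inr_right (Vr ^ m * (inr (ofAdd m))⁻¹)
    have hr : (Vr ^ m * (inr (ofAdd m))⁻¹).right = 1 := by
      rw [mul_right, Vr_right, inv_right, right_inr]; group
    rw [hr, map_one, mul_one] at h1
    exact h1.symm
  rw [← h]; group
lemma wF_zero : wF 0 = 1 := by simp [wF]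
lemma wF_succ (m : ℤ) : wF (m + 1) = wF m * FreeGroup.of m := by
  have h : Vr ^ (m+1) = inl (wF m * FreeGroup.of m) * inr (ofAdd (m+1)) := by
    rw [zpow_add_one, Vr_zpow, Vr]
    rw [show (inl (wF m) * inr (ofAdd m) * (inl (FreeGroup.of 0) * inr (ofAdd 1)) : RR)
        = inl (wF m) * (inr (ofAdd m) * inl (FreeGroup.of 0) * inr (ofAdd m)⁻¹) *
          (inr (ofAdd m) * inr (ofAdd 1)) by rw [_root_.map_inv]; group]
    rw [← inl_aut, ← map_mul, ← map_mul, actZ_of]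
    norm_num
  have h2 := Vr_zpow (m+1)
  rw [h] at h2
  exact inl_injective (mul_right_cancel h2.symm)
lemma wF_pred (m : ℤ) : wF (m - 1) = wF m * (FreeGroup.of (m-1))⁻¹ := by
  have := wF_succ (m-1); rw [sub_add_cancel] at this; rw [this]; group

def tF : FZ →* FZ := FreeGroup.lift (fun m => wF m * (FreeGroup.of m)⁻¹ * (wF m)⁻¹)
lemma tF_of (m : ℤ) : tF (FreeGroup.of m) = wF m * (FreeGroup.of m)⁻¹ * (wF m)⁻¹ :=
  FreeGroup.lift_apply_of
lemma tF_wF (m : ℤ) : tF (wF m) = (wF m)⁻¹ := by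
  induction m using Int.induction_on with
  | zero => rw [wF_zero]; simp
  | succ k ih => rw [wF_succ, map_mul, ih, tF_of]; group
  | pred k ih =>
    rw [show (-(k:ℤ) - 1) = (-(k:ℤ)) - 1 by ring, wF_pred, map_mul, ih, _root_.map_inv, tF_of,
      wF_pred]
    group
lemma tF_tF (x : FZ) : tF (tF x) = x := by
  have h : tF.comp tF = MonoidHom.id FZ := by
    apply FreeGroup.ext_hom
    intro m
    simp only [MonoidHom.comp_apply, MonoidHom.id_apply]
    rw [tF_of, map_mul, map_mul, tF_wF, _root_.map_inv, tF_of, _root_.map_inv, tF_wF]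
    group
  exact DFunLike.congr_fun h x
lemma conj_Vr (n m : ℤ) : Vr ^ n * inl (tF (FreeGroup.of m)) * (Vr ^ n)⁻¹
    = inl (tF (FreeGroup.of (m + n))) := by
  have key : ∀ a : FZ, Vr ^ n * inl a * (Vr ^ n)⁻¹ = inl (wF n * (actZ (ofAdd n)) a * (wF n)⁻¹) := by
    intro a
    rw [Vr_zpow, map_mul, map_mul]
    rw [show inl (wF n) * inr (ofAdd n) * inl a * (inl (wF n) * inr (ofAdd n))⁻¹
      = inl (wF n) * (inr (ofAdd n) * inl a * inr (ofAdd n)⁻¹) * (inl (wF n))⁻¹ by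
        rw [_root_.map_inv]; group]
    rw [← inl_aut, ← _root_.map_mul, ← _root_.map_inv, ← _root_.map_mul]
  rw [key, tF_of, tF_of]
  congr 1
  have hw : ∀ m : ℤ, wF n * (actZ (ofAdd n)) (wF m) = wF (m + n) := by
    intro m
    induction m using Int.induction_on with
    | zero => rw [wF_zero, _root_.map_one, mul_one, zero_add]
    | succ k ih => rw [wF_succ, _root_.map_mul, ← mul_assoc, ih, actZ_of, ← wF_succ]; ring_nf
    | pred k ih =>
      rw [show (-(k:ℤ) - 1) = (-(k:ℤ)) - 1 by ring, wF_pred, _root_.map_mul, _root_.map_inv,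
        ← mul_assoc, ih, actZ_of, show (-(k:ℤ)-1+n) = (-(k:ℤ)+n) - 1 by ring, wF_pred]
  rw [_root_.map_mul, _root_.map_mul, _root_.map_inv, _root_.map_inv, actZ_of]
  rw [← hw m]; group
def tR : RR →* RR :=
  SemidirectProduct.lift (inl.comp tF) (zpowersHom RR Vr) (by
    intro g
    apply FreeGroup.ext_hom
    intro m
    simp only [MonoidHom.comp_apply, MulEquiv.coe_toMonoidHom, MulAut.conj_apply,
      zpowersHom_apply]
    rw [show (actZ g) (FreeGroup.of m) = FreeGroup.of (m + g.toAdd) from actZ_of g.toAdd m]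
    exact (conj_Vr g.toAdd m).symm)
lemma tR_inl (a : FZ) : tR (inl a) = inl (tF a) := by simp [tR]
lemma tR_inr : tR (inr (ofAdd 1)) = Vr := by simp [tR]
lemma tR_tR (x : RR) : tR (tR x) = x := by
  have h : tR.comp tR = MonoidHom.id RR := by
    apply SemidirectProduct.hom_ext
    · apply FreeGroup.ext_hom  -- hom ext for FZ →* RR? composition with inl
      intro m
      simp only [MonoidHom.comp_apply, MonoidHom.id_apply]
      rw [tR_inl, tR_inl, tF_tF]
    · apply MonoidHom.ext_mint
      simp only [MonoidHom.comp_apply, MonoidHom.id_apply]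
      rw [tR_inr, Vr, map_mul, tR_inl, tR_inr, tF_of, wF_zero]
      simp [Vr]
  exact DFunLike.congr_fun h x

def tauR : MulAut RR :=
  { toFun := tR, invFun := tR, left_inv := tR_tR, right_inv := tR_tR,
    map_mul' := map_mul tR }
lemma tauR_sq : tauR * tauR = 1 := MulEquiv.ext tR_tR
abbrev C2 := Multiplicative (ZMod 2)
lemma C2_cases (u : C2) : u = 1 ∨ u = ofAdd 1 := by
  revert u; decide
lemma C2_mul : (ofAdd (1:ZMod 2)) * (ofAdd 1) = 1 := by decide
lemma C2_ne : (ofAdd (1:ZMod 2)) ≠ 1 := by decide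
def actC : C2 →* MulAut RR :=
  { toFun := fun u => if u = 1 then 1 else tauR,
    map_one' := if_pos rfl,
    map_mul' := by
      intro u v
      rcases C2_cases u with hu | hu <;> rcases C2_cases v with hv | hv <;>
        subst hu <;> subst hv <;>
        simp [C2_mul, C2_ne, tauR_sq] }
abbrev GG := RR ⋊[actC] C2
def Sg : GG := inl Sr
def Pg : GG := inr (ofAdd (1 : ZMod 2))
lemma Pg_sq : Pg * Pg = 1 := by
  rw [Pg, ← _root_.map_mul, C2_mul, _root_.map_one]
lemma Pg_inv : Pg⁻¹ = Pg := inv_eq_of_mul_eq_one_right Pg_sq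
lemma actC_apply : actC (ofAdd (1 : ZMod 2)) = tauR := by
  rw [actC]
  simp only [MonoidHom.coe_mk, OneHom.coe_mk]
  rw [if_neg C2_ne]
lemma Sg_zpow (m : ℤ) : Sg ^ m = inl (inr (ofAdd m)) := by
  rw [Sg, ← map_zpow, Sr_zpow]
lemma PSP : Pg * Sg * Pg⁻¹ = inl Vr := by
  rw [Pg, Sg, show (inr (ofAdd (1:ZMod 2)) : GG)⁻¹ = inr ((ofAdd (1:ZMod 2))⁻¹) by
    rw [_root_.map_inv], ← inl_aut, actC_apply]
  exact congrArg inl tR_inr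
lemma key_a (m : ℤ) : Sg ^ m * (Pg * Sg * Pg * Sg⁻¹) * Sg ^ (-m)
    = inl (inl (FreeGroup.of m)) := by
  have h1 : Pg * Sg * Pg * Sg⁻¹ = inl (inl (FreeGroup.of 0)) := by
    rw [show Pg * Sg * Pg * Sg⁻¹ = (Pg * Sg * Pg⁻¹) * Sg⁻¹ by rw [Pg_inv], PSP, Sg,
      ← _root_.map_inv, ← _root_.map_mul, Vr, Sr]
    group
  rw [h1, Sg_zpow, Sg_zpow, ← _root_.map_mul, ← _root_.map_mul]
  have h2 : (inr (ofAdd (-m)) : RR) = inr ((ofAdd m)⁻¹) := rfl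
  rw [h2, ← inl_aut, actZ_of]
  norm_num

end VB3Aux

-- VB side
namespace VBP
open Subgroup
open scoped commutatorElement

lemma mk_rel {r : FreeGroup (VBGen 3)} (hr : r ∈ vbRels 3) :
    PresentedGroup.mk (vbRels 3) r = 1 :=
  (QuotientGroup.eq_one_iff r).2 (Subgroup.subset_normalClosure hr)

lemma fσ1 : fσ 3 1 = FreeGroup.of (Sum.inl (⟨0, by norm_num⟩ : Fin 2)) := by
  rw [fσ, dif_pos (by norm_num)]
lemma fσ2 : fσ 3 2 = FreeGroup.of (Sum.inl (⟨1, by norm_num⟩ : Fin 2)) := by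
  rw [fσ, dif_pos (by norm_num)]
lemma fρ1 : fρ 3 1 = FreeGroup.of (Sum.inr (⟨0, by norm_num⟩ : Fin 2)) := by
  rw [fρ, dif_pos (by norm_num)]
lemma fρ2 : fρ 3 2 = FreeGroup.of (Sum.inr (⟨1, by norm_num⟩ : Fin 2)) := by
  rw [fρ, dif_pos (by norm_num)]

noncomputable abbrev s : VB 3 := vσ 3 1
noncomputable abbrev s2 : VB 3 := vσ 3 2
noncomputable abbrev p : VB 3 := vρ 3 1
noncomputable abbrev p2 : VB 3 := vρ 3 2

lemma rel_p : p * p = 1 := by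
  have h := mk_rel (Or.inr ⟨1, by norm_num, by norm_num, rfl⟩)
  rwa [map_mul] at h
lemma rel_p2 : p2 * p2 = 1 := by
  have h := mk_rel (Or.inr ⟨2, by norm_num, by norm_num, rfl⟩)
  rwa [map_mul] at h
lemma rel_braid : p * p2 * p = p2 * p * p2 := by
  have h := mk_rel (Or.inl (Or.inr ⟨1, by norm_num, by norm_num, Or.inr (Or.inl rfl)⟩))
  simp only [map_mul, map_inv] at h
  have h2 : (p * p2 * p) * (p2 * p * p2)⁻¹ = 1 := by
    rw [show (p2 * p * p2)⁻¹ = p2⁻¹ * p⁻¹ * p2⁻¹ by group]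
    rw [show p * p2 * p * (p2⁻¹ * p⁻¹ * p2⁻¹) = p * p2 * p * p2⁻¹ * p⁻¹ * p2⁻¹ by group]
    exact h
  exact mul_inv_eq_one.mp h2
lemma rel_mixed : p * p2 * s = s2 * p * p2 := by
  have h := mk_rel (Or.inl (Or.inr ⟨1, by norm_num, by norm_num, Or.inr (Or.inr rfl)⟩))
  simp only [map_mul, map_inv] at h
  have h2 : (p * p2 * s) * (p2⁻¹ * p⁻¹ * s2⁻¹) = 1 := by
    rw [show p * p2 * s * (p2⁻¹ * p⁻¹ * s2⁻¹) = p * p2 * s * p2⁻¹ * p⁻¹ * s2⁻¹ by group]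
    exact h
  have h3 : p * p2 * s = s2 * (p * p2) := by
    rw [show p2⁻¹ * p⁻¹ * s2⁻¹ = (s2 * (p * p2))⁻¹ by group] at h2
    exact mul_inv_eq_one.mp h2
  rw [h3]; group
end VBP


namespace VBP
open Subgroup
open scoped commutatorElement

lemma p_inv : p⁻¹ = p := inv_eq_of_mul_eq_one_right rel_p
lemma p2_inv : p2⁻¹ = p2 := inv_eq_of_mul_eq_one_right rel_p2

noncomputable abbrev u : VB 3 := p2 * p

lemma vf00 : vf 3 0 0 = u := by
  simp [vf, u, vρ, vσ]
lemma u_inv : u⁻¹ = p * p2 := by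
  rw [show u⁻¹ = p⁻¹ * p2⁻¹ by group, p_inv, p2_inv]
lemma hu2 : u * u = u⁻¹ := by
  rw [u_inv]
  calc p2 * p * (p2 * p) = p2 * (p * p2 * p) := by group
    _ = p2 * (p2 * p * p2) := by rw [rel_braid]
    _ = (p2 * p2) * (p * p2) := by group
    _ = p * p2 := by rw [rel_p2]; group
lemma pup : p * u * p⁻¹ = u⁻¹ := by
  have h1 : p * u * p⁻¹ = p * p2 := by
    rw [p_inv]
    calc p * (p2 * p) * p = p * p2 * (p * p) := by group
      _ = p * p2 := by rw [rel_p, mul_one]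
  rw [h1, u_inv]
lemma u_comm : u ∈ commutator (VB 3) := by
  have hc : p * u⁻¹ * p⁻¹ = u := by
    rw [show p * u⁻¹ * p⁻¹ = (p * u * p⁻¹)⁻¹ by group, pup, inv_inv]
  have h1 : ⁅p, u⁻¹⁆ = u * u := by
    rw [commutatorElement_def, inv_inv, hc]
  have h2 : u = (u * u) * (u * u) := by
    have h3 : u * u * u = 1 := by rw [hu2]; group
    calc u = (u * u * u) * u := by rw [h3]; group
      _ = (u * u) * (u * u) := by group
  rw [h2, ← h1]
  exact mul_mem (commutator_mem_commutator (mem_top _) (mem_top _))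
    (commutator_mem_commutator (mem_top _) (mem_top _))
lemma hs2 : s2 = u⁻¹ * s * u := by
  have h : s2 = (p * p2 * s) * (p * p2)⁻¹ := by rw [rel_mixed]; group
  have h2 : s2 = p * p2 * s * (p2 * p) := by
    rw [h, show ((p*p2 : VB 3))⁻¹ = p2⁻¹ * p⁻¹ by group, p_inv, p2_inv]
  rw [h2, u_inv]
lemma hp2 : p2 = u * p := by
  rw [show (u : VB 3) = p2 * p from rfl]
  rw [show p2 * p * p = p2 * (p * p) by group, rel_p]; group

lemma va_eq (m : ℤ) : va 3 m = s ^ m * (p * s * p * s⁻¹) * s ^ (-m) := rfl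
lemma vf_eq (m : ℤ) : vf 3 m 0 = s ^ m * u * s ^ (-m) := by
  rw [vf]
  norm_num
lemma a0_comm : va 3 0 ∈ commutator (VB 3) := by
  have : va 3 0 = ⁅p, s⁆ := by
    rw [va_eq, commutatorElement_def, p_inv]; group
  rw [this]
  exact commutator_mem_commutator (mem_top _) (mem_top _)
lemma ha (m : ℤ) : va 3 m ∈ commutator (VB 3) := by
  have h : va 3 m = s ^ m * va 3 0 * (s ^ m)⁻¹ := by
    rw [va_eq, va_eq]; group
  rw [h]
  exact (Subgroup.commutator_normal ⊤ ⊤).conj_mem _ a0_comm _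
lemma hf (m : ℤ) : vf 3 m 0 ∈ commutator (VB 3) := by
  have h : vf 3 m 0 = s ^ m * u * (s ^ m)⁻¹ := by rw [vf_eq]; group
  rw [h]
  exact (Subgroup.commutator_normal ⊤ ⊤).conj_mem _ u_comm _
end VBP


namespace VBP
open Subgroup
open scoped commutatorElement

lemma va0_eq : va 3 0 = p * s * p * s⁻¹ := by rw [va_eq]; group
lemma conj_s_va (m : ℤ) : s * va 3 m * s⁻¹ = va 3 (m + 1) := by
  rw [va_eq, va_eq, zpow_neg, zpow_neg, zpow_add_one]; group
lemma conj_si_va (m : ℤ) : s⁻¹ * va 3 m * s = va 3 (m - 1) := by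
  have := conj_s_va (m-1); rw [sub_add_cancel] at this; rw [← this]; group
lemma conj_s_vf (m : ℤ) : s * vf 3 m 0 * s⁻¹ = vf 3 (m + 1) 0 := by
  rw [vf_eq, vf_eq, zpow_neg, zpow_neg, zpow_add_one]; group
lemma conj_si_vf (m : ℤ) : s⁻¹ * vf 3 m 0 * s = vf 3 (m - 1) 0 := by
  have := conj_s_vf (m-1); rw [sub_add_cancel] at this; rw [← this]; group

noncomputable def Wb (m : ℤ) : VB 3 := (va 3 0 * s) ^ m * s ^ (-m)
lemma Wb_succ (m : ℤ) : Wb (m + 1) = Wb m * va 3 m := by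
  rw [Wb, Wb, zpow_add_one, zpow_neg, zpow_neg, zpow_add_one,
    show va 3 m = s ^ m * va 3 0 * s ^ (-m) by rw [va_eq m, va0_eq], zpow_neg]
  group
lemma Wb_pred (m : ℤ) : Wb (m - 1) = Wb m * (va 3 (m-1))⁻¹ := by
  have := Wb_succ (m-1); rw [sub_add_cancel] at this; rw [this]; group
lemma Wb_mem (m : ℤ) : Wb m ∈ Subgroup.closure (Set.range (va 3)) := by
  induction m using Int.induction_on with
  | zero => rw [show Wb 0 = 1 by rw [Wb]; group]; exact one_mem _
  | succ k ih =>
    rw [Wb_succ]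
    exact mul_mem ih (subset_closure ⟨k, rfl⟩)
  | pred k ih =>
    rw [show (-(k:ℤ) - 1) = (-(k:ℤ)) - 1 by ring, Wb_pred]
    exact mul_mem ih (inv_mem (subset_closure ⟨_, rfl⟩))
lemma Wb_neg (m : ℤ) : Wb (-m) = s ^ (-m) * (Wb m)⁻¹ * s ^ m := by
  rw [Wb, Wb]; group

lemma conj_p_szpow (m : ℤ) : p * s ^ m * p⁻¹ = Wb m * s ^ m := by
  have h1 := map_zpow (MulAut.conj p) s m
  simp only [MulAut.conj_apply] at h1
  have h2 : p * s * p⁻¹ = va 3 0 * s := by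
    rw [va0_eq, p_inv]; group
  rw [h1, h2, Wb]; group
lemma conj_p_va (m : ℤ) : p * va 3 m * p⁻¹ = Wb m * (va 3 m)⁻¹ * (Wb m)⁻¹ := by
  have ha0 : p * va 3 0 * p⁻¹ = (va 3 0)⁻¹ := by
    rw [va0_eq, p_inv, show (p * (p * s * p * s⁻¹) * p) = (p*p) * s * p * s⁻¹ * p by group, rel_p,
      show (p * s * p * s⁻¹)⁻¹ = s * p⁻¹ * s⁻¹ * p⁻¹ by group, p_inv]
    group
  calc p * va 3 m * p⁻¹
      = (p * s^m * p⁻¹) * (p * va 3 0 * p⁻¹) * (p * s^(-m) * p⁻¹) := by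
        rw [va_eq, va0_eq]; group
    _ = (Wb m * s^m) * (va 3 0)⁻¹ * (Wb (-m) * s^(-m)) := by
        rw [conj_p_szpow, conj_p_szpow, ha0]
    _ = Wb m * (va 3 m)⁻¹ * (Wb m)⁻¹ := by
        rw [Wb_neg, show va 3 m = s ^ m * va 3 0 * s ^ (-m) by rw [va_eq m, va0_eq]]
        group
lemma conj_p_vf (m : ℤ) : p * vf 3 m 0 * p⁻¹ = Wb m * (vf 3 m 0)⁻¹ * (Wb m)⁻¹ := by
  calc p * vf 3 m 0 * p⁻¹
      = (p * s^m * p⁻¹) * (p * u * p⁻¹) * (p * s^(-m) * p⁻¹) := by rw [vf_eq]; group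
    _ = (Wb m * s^m) * u⁻¹ * (Wb (-m) * s^(-m)) := by rw [conj_p_szpow, conj_p_szpow, pup]
    _ = Wb m * (vf 3 m 0)⁻¹ * (Wb m)⁻¹ := by
        rw [Wb_neg, vf_eq]; group
end VBP



namespace VBP
open Subgroup
open scoped commutatorElement

def Aset : Set (VB 3) := Set.range (va 3)
def FSet : Set (VB 3) := Set.range (fun m : ℤ => vf 3 m 0)
def Mgrp : Subgroup (VB 3) := Subgroup.normalClosure FSet
def Cgrp : Subgroup (VB 3) := Subgroup.closure (Aset ∪ Mgrp)
instance M_normal : Mgrp.Normal := Subgroup.normalClosure_normal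
lemma closureA_le : Subgroup.closure (Set.range (va 3)) ≤ Cgrp :=
  Subgroup.closure_mono Set.subset_union_left
lemma A_sub_C (m : ℤ) : va 3 m ∈ Cgrp := subset_closure (Or.inl ⟨m, rfl⟩)
lemma M_le_C : Mgrp ≤ Cgrp := fun _ hx => subset_closure (Or.inr hx)
lemma f_mem_M (m : ℤ) : vf 3 m 0 ∈ Mgrp := subset_normalClosure ⟨m, rfl⟩
lemma u_mem_M : u ∈ Mgrp := by rw [← vf00]; exact f_mem_M 0

lemma conj_s_C : ∀ g ∈ Cgrp, s * g * s⁻¹ ∈ Cgrp := by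
  intro g hg
  refine Subgroup.closure_induction ?_ ?_ ?_ ?_ hg
  · rintro x (⟨m, rfl⟩ | hx)
    · rw [conj_s_va]; exact A_sub_C _
    · exact M_le_C (M_normal.conj_mem _ hx _)
  · simpa using one_mem Cgrp
  · intro x y _ _ hx hy
    rw [show s * (x * y) * s⁻¹ = (s * x * s⁻¹) * (s * y * s⁻¹) by group]
    exact mul_mem hx hy
  · intro x _ hx
    rw [show s * x⁻¹ * s⁻¹ = (s * x * s⁻¹)⁻¹ by group]
    exact inv_mem hx
lemma conj_si_C : ∀ g ∈ Cgrp, s⁻¹ * g * s ∈ Cgrp := by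
  intro g hg
  refine Subgroup.closure_induction ?_ ?_ ?_ ?_ hg
  · rintro x (⟨m, rfl⟩ | hx)
    · rw [conj_si_va]; exact A_sub_C _
    · rw [show s⁻¹ * x * s = s⁻¹ * x * (s⁻¹)⁻¹ by group]
      exact M_le_C (M_normal.conj_mem _ hx _)
  · simpa using one_mem Cgrp
  · intro x y _ _ hx hy
    rw [show s⁻¹ * (x * y) * s = (s⁻¹ * x * s) * (s⁻¹ * y * s) by group]
    exact mul_mem hx hy
  · intro x _ hx
    rw [show s⁻¹ * x⁻¹ * s = (s⁻¹ * x * s)⁻¹ by group]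
    exact inv_mem hx
lemma conj_p_C : ∀ g ∈ Cgrp, p * g * p⁻¹ ∈ Cgrp := by
  intro g hg
  refine Subgroup.closure_induction ?_ ?_ ?_ ?_ hg
  · rintro x (⟨m, rfl⟩ | hx)
    · rw [conj_p_va]
      exact mul_mem (mul_mem (closureA_le (Wb_mem m)) (inv_mem (A_sub_C m)))
        (inv_mem (closureA_le (Wb_mem m)))
    · exact M_le_C (M_normal.conj_mem _ hx _)
  · simpa using one_mem Cgrp
  · intro x y _ _ hx hy
    rw [show p * (x * y) * p⁻¹ = (p * x * p⁻¹) * (p * y * p⁻¹) by group]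
    exact mul_mem hx hy
  · intro x _ hx
    rw [show p * x⁻¹ * p⁻¹ = (p * x * p⁻¹)⁻¹ by group]
    exact inv_mem hx
end VBP


namespace VBP
open Subgroup
open scoped commutatorElement

lemma s_norm : s ∈ Subgroup.normalizer (Cgrp : Set (VB 3)) := by
  rw [Subgroup.mem_normalizer_iff]
  intro h
  constructor
  · exact conj_s_C h
  · intro hh
    have h2 := conj_si_C _ hh
    rwa [show s⁻¹ * (s * h * s⁻¹) * s = h by group] at h2
lemma p_norm : p ∈ Subgroup.normalizer (Cgrp : Set (VB 3)) := by
  rw [Subgroup.mem_normalizer_iff]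
  intro h
  constructor
  · exact conj_p_C h
  · intro hh
    have h2 := conj_p_C _ hh
    rwa [show p * (p * h * p⁻¹) * p⁻¹ = (p * p) * h * (p * p)⁻¹ by group, rel_p, one_mul,
      inv_one, mul_one] at h2
lemma u_norm : u ∈ Subgroup.normalizer (Cgrp : Set (VB 3)) := Subgroup.le_normalizer (M_le_C u_mem_M)
lemma s2_norm : s2 ∈ Subgroup.normalizer (Cgrp : Set (VB 3)) := by
  rw [hs2]; exact mul_mem (mul_mem (inv_mem u_norm) s_norm) u_norm
lemma p2_norm : p2 ∈ Subgroup.normalizer (Cgrp : Set (VB 3)) := by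
  rw [hp2]; exact mul_mem u_norm p_norm

lemma of_inl0 : (PresentedGroup.of (Sum.inl (0 : Fin 2)) : VB 3) = s := by
  show PresentedGroup.mk (vbRels 3) (FreeGroup.of (Sum.inl (0 : Fin 2))) = vσ 3 1
  rw [vσ, fσ1]; rfl
lemma of_inl1 : (PresentedGroup.of (Sum.inl (1 : Fin 2)) : VB 3) = s2 := by
  show PresentedGroup.mk (vbRels 3) (FreeGroup.of (Sum.inl (1 : Fin 2))) = vσ 3 2
  rw [vσ, fσ2]; rfl
lemma of_inr0 : (PresentedGroup.of (Sum.inr (0 : Fin 2)) : VB 3) = p := by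
  show PresentedGroup.mk (vbRels 3) (FreeGroup.of (Sum.inr (0 : Fin 2))) = vρ 3 1
  rw [vρ, fρ1]; rfl
lemma of_inr1 : (PresentedGroup.of (Sum.inr (1 : Fin 2)) : VB 3) = p2 := by
  show PresentedGroup.mk (vbRels 3) (FreeGroup.of (Sum.inr (1 : Fin 2))) = vρ 3 2
  rw [vρ, fρ2]; rfl

instance C_normal : Cgrp.Normal := by
  rw [← Subgroup.normalizer_eq_top_iff, eq_top_iff, ← PresentedGroup.closure_range_of (vbRels 3)]
  rw [Subgroup.closure_le]
  rintro _ ⟨x, rfl⟩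
  rcases x with i | i <;> fin_cases i
  · exact of_inl0 ▸ s_norm
  · exact of_inl1 ▸ s2_norm
  · exact of_inr0 ▸ p_norm
  · exact of_inr1 ▸ p2_norm
end VBP


namespace VBP
open Subgroup
open scoped commutatorElement

noncomputable def mkC : VB 3 →* VB 3 ⧸ Cgrp := QuotientGroup.mk' Cgrp
lemma mkC_eq_one {g : VB 3} (hg : g ∈ Cgrp) : mkC g = 1 :=
  (QuotientGroup.eq_one_iff g).2 hg
lemma mkC_s2 : mkC s2 = mkC s := by
  rw [hs2, map_mul, map_mul, map_inv, mkC_eq_one (M_le_C u_mem_M)]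
  group
lemma mkC_p2 : mkC p2 = mkC p := by
  rw [hp2, map_mul, mkC_eq_one (M_le_C u_mem_M), one_mul]
lemma comm_ps : Commute (mkC p) (mkC s) := by
  have h1 : mkC p * mkC s * mkC p * (mkC s)⁻¹ = 1 := by
    rw [← map_inv, ← map_mul, ← map_mul, ← map_mul]
    exact mkC_eq_one (va0_eq ▸ A_sub_C 0)
  have hpp : mkC p * mkC p = 1 := by
    rw [← map_mul, rel_p, map_one]
  have h2 : mkC p * mkC s * mkC p = mkC s := mul_inv_eq_one.mp h1
  have hpinv : (mkC p)⁻¹ = mkC p := inv_eq_of_mul_eq_one_right hpp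
  show mkC p * mkC s = mkC s * mkC p
  calc mkC p * mkC s = (mkC p * mkC s * mkC p) * (mkC p)⁻¹ := by group
    _ = mkC s * mkC p := by rw [h2, hpinv]

lemma gen_quot (z : VB 3 ⧸ Cgrp) : z ∈ Subgroup.closure ({mkC s, mkC p} : Set (VB 3 ⧸ Cgrp)) := by
  have htop : Subgroup.closure (mkC '' Set.range (PresentedGroup.of : VBGen 3 → VB 3))
      = ⊤ := by
    rw [← MonoidHom.map_closure, PresentedGroup.closure_range_of, ← MonoidHom.range_eq_map]
    exact MonoidHom.range_eq_top.2 (QuotientGroup.mk'_surjective _)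
  have hsub : mkC '' Set.range (PresentedGroup.of : VBGen 3 → VB 3)
      ⊆ ({mkC s, mkC p} : Set (VB 3 ⧸ Cgrp)) := by
    rintro _ ⟨_, ⟨x, rfl⟩, rfl⟩
    rcases x with i | i <;> fin_cases i
    · exact Or.inl (congrArg mkC of_inl0)
    · exact Or.inl ((congrArg mkC of_inl1).trans mkC_s2)
    · exact Or.inr ((congrArg mkC of_inr0))
    · exact Or.inr ((congrArg mkC of_inr1).trans mkC_p2)
  have := Subgroup.closure_mono hsub
  rw [htop] at this
  exact this (mem_top z)

lemma quot_comm (a b : VB 3 ⧸ Cgrp) : Commute a b := by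
  have key : ∀ x : VB 3 ⧸ Cgrp, x ∈ Subgroup.closure ({mkC s, mkC p} : Set (VB 3 ⧸ Cgrp)) →
      ∀ y, Commute x y := by
    intro x hx
    refine Subgroup.closure_induction ?_ ?_ ?_ ?_ hx
    · rintro x' (rfl | rfl)
      · intro y
        refine Subgroup.closure_induction ?_ ?_ ?_ ?_ (gen_quot y)
        · rintro y' (rfl | rfl)
          · exact Commute.refl _
          · exact comm_ps.symm
        · exact Commute.one_right _
        · exact fun _ _ _ _ h1 h2 => h1.mul_right h2
        · exact fun _ _ h1 => h1.inv_right
      · intro y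
        refine Subgroup.closure_induction ?_ ?_ ?_ ?_ (gen_quot y)
        · rintro y' (rfl | rfl)
          · exact comm_ps
          · exact Commute.refl _
        · exact Commute.one_right _
        · exact fun _ _ _ _ h1 h2 => h1.mul_right h2
        · exact fun _ _ h1 => h1.inv_right
    · exact fun y => Commute.one_left _
    · exact fun _ _ _ _ h1 h2 y => (h1 y).mul_left (h2 y)
    · exact fun _ _ h1 y => (h1 y).inv_left
  exact key a (gen_quot a) b

lemma commutator_le_C : commutator (VB 3) ≤ Cgrp := by
  rw [commutator_def]
  rw [Subgroup.commutator_le]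
  intro g _ h _
  rw [← QuotientGroup.eq_one_iff (G := VB 3) (N := Cgrp)]
  show mkC ⁅g, h⁆ = 1
  rw [map_commutatorElement]
  exact commutatorElement_eq_one_iff_commute.mpr (quot_comm _ _)

lemma C_le_commutator : Cgrp ≤ commutator (VB 3) := by
  rw [Cgrp, Subgroup.closure_le]
  rintro x (⟨m, rfl⟩ | hx)
  · exact ha m
  · refine Subgroup.normalClosure_le_normal ?_ hx
    rintro _ ⟨m, rfl⟩
    exact hf m
end VBP


namespace VBP
open Subgroup
open scoped commutatorElement

def SetS : Set ↥(commutator (VB 3)) := {x | ∃ m : ℤ, (x : VB 3) = vf 3 m 0}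
def Ngrp : Subgroup ↥(commutator (VB 3)) := Subgroup.normalClosure SetS
instance N_normal : Ngrp.Normal := Subgroup.normalClosure_normal
def Ngrp' : Subgroup (VB 3) := Subgroup.map (commutator (VB 3)).subtype Ngrp

def conjComm (g : VB 3) : ↥(commutator (VB 3)) →* ↥(commutator (VB 3)) where
  toFun x := ⟨g * (x : VB 3) * g⁻¹, (Subgroup.commutator_normal ⊤ ⊤).conj_mem _ x.2 g⟩
  map_one' := by ext; simp
  map_mul' x y := by ext; show g * (↑x * ↑y) * g⁻¹ = _; push_cast; group

lemma conj_mem_N {g : VB 3}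
    (hgen : ∀ x ∈ SetS, conjComm g x ∈ Ngrp) :
    ∀ x ∈ Ngrp, conjComm g x ∈ Ngrp := by
  intro x hx
  haveI : (Subgroup.comap (conjComm g) Ngrp).Normal := Subgroup.Normal.comap N_normal _
  exact Subgroup.normalClosure_le_normal (fun y hy => Subgroup.mem_comap.2 (hgen y hy)) hx

lemma conjN_s : ∀ x ∈ Ngrp, conjComm s x ∈ Ngrp := by
  refine conj_mem_N ?_
  rintro x ⟨m, hm⟩
  have hval : conjComm s x = (⟨vf 3 (m+1) 0, hf _⟩ : ↥(commutator (VB 3))) := by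
    ext; show s * (x : VB 3) * s⁻¹ = _; rw [hm, conj_s_vf]
  rw [hval]
  exact subset_normalClosure ⟨m+1, rfl⟩
lemma conjN_si : ∀ x ∈ Ngrp, conjComm s⁻¹ x ∈ Ngrp := by
  refine conj_mem_N ?_
  rintro x ⟨m, hm⟩
  have hval : conjComm s⁻¹ x = (⟨vf 3 (m-1) 0, hf _⟩ : ↥(commutator (VB 3))) := by
    ext; show s⁻¹ * (x : VB 3) * s⁻¹⁻¹ = _; rw [hm, inv_inv, conj_si_vf]
  rw [hval]
  exact subset_normalClosure ⟨m-1, rfl⟩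
lemma conjN_p : ∀ x ∈ Ngrp, conjComm p x ∈ Ngrp := by
  refine conj_mem_N ?_
  rintro x ⟨m, hm⟩
  have hxN : x ∈ Ngrp := subset_normalClosure ⟨m, hm⟩
  have hW : Wb m ∈ commutator (VB 3) := C_le_commutator (closureA_le (Wb_mem m))
  have hval : conjComm p x = (⟨Wb m, hW⟩ : ↥(commutator (VB 3))) * x⁻¹ * (⟨Wb m, hW⟩)⁻¹ := by
    ext
    show p * (x : VB 3) * p⁻¹ = _
    rw [hm]
    push_cast
    rw [conj_p_vf, hm]
  rw [hval, show (⟨Wb m, hW⟩ : ↥(commutator (VB 3))) * x⁻¹ * (⟨Wb m, hW⟩)⁻¹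
    = (⟨Wb m, hW⟩ : ↥(commutator (VB 3))) * x⁻¹ * (⟨Wb m, hW⟩ : ↥(commutator (VB 3)))⁻¹ from rfl]
  exact N_normal.conj_mem _ (inv_mem hxN) _

lemma comm_mem_normalizer {g : VB 3} (hg : g ∈ commutator (VB 3)) :
    g ∈ Subgroup.normalizer (Ngrp' : Set (VB 3)) := by
  rw [Subgroup.mem_normalizer_iff]
  intro h
  constructor
  · rintro ⟨h₀, hh₀, rfl⟩
    exact ⟨(⟨g, hg⟩ : ↥(commutator (VB 3))) * h₀ * (⟨g, hg⟩)⁻¹,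
      N_normal.conj_mem _ hh₀ _, rfl⟩
  · rintro ⟨k₀, hk₀, hk⟩
    have h1 : (⟨g, hg⟩ : ↥(commutator (VB 3)))⁻¹ * k₀ * ((⟨g, hg⟩ : ↥(commutator (VB 3)))⁻¹)⁻¹ ∈ Ngrp :=
      N_normal.conj_mem _ hk₀ _
    rw [inv_inv] at h1
    have h2 : h = (((⟨g, hg⟩ : ↥(commutator (VB 3)))⁻¹ * k₀ * ⟨g, hg⟩ : ↥(commutator (VB 3))) : VB 3) := by
      have hval : (k₀ : VB 3) = g * h * g⁻¹ := hk
      push_cast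
      rw [hval]; group
    rw [h2]
    exact ⟨_, h1, rfl⟩

lemma s_mem_normalizerN : s ∈ Subgroup.normalizer (Ngrp' : Set (VB 3)) := by
  rw [Subgroup.mem_normalizer_iff]
  intro h
  constructor
  · rintro ⟨h₀, hh₀, rfl⟩
    exact ⟨conjComm s h₀, conjN_s h₀ hh₀, rfl⟩
  · rintro ⟨k₀, hk₀, hk⟩
    have hh : h = ((conjComm s⁻¹ k₀ : ↥(commutator (VB 3))) : VB 3) := by
      show h = s⁻¹ * (k₀ : VB 3) * s⁻¹⁻¹
      rw [show (k₀ : VB 3) = s * h * s⁻¹ from hk]; group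
    rw [hh]
    exact ⟨_, conjN_si k₀ hk₀, rfl⟩
lemma p_mem_normalizerN : p ∈ Subgroup.normalizer (Ngrp' : Set (VB 3)) := by
  rw [Subgroup.mem_normalizer_iff]
  intro h
  constructor
  · rintro ⟨h₀, hh₀, rfl⟩
    exact ⟨conjComm p h₀, conjN_p h₀ hh₀, rfl⟩
  · rintro ⟨k₀, hk₀, hk⟩
    have hh : h = ((conjComm p k₀ : ↥(commutator (VB 3))) : VB 3) := by
      show h = p * (k₀ : VB 3) * p⁻¹
      rw [show (k₀ : VB 3) = p * h * p⁻¹ from hk, p_inv,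
        show p * (p * h * p) * p = (p * p) * h * (p * p) by group, rel_p]
      group
    rw [hh]
    exact ⟨_, conjN_p k₀ hk₀, rfl⟩

instance N'_normal : Ngrp'.Normal := by
  rw [← Subgroup.normalizer_eq_top_iff, eq_top_iff, ← PresentedGroup.closure_range_of (vbRels 3),
    Subgroup.closure_le]
  rintro _ ⟨x, rfl⟩
  have hs2n : s2 ∈ Subgroup.normalizer (Ngrp' : Set (VB 3)) := by
    rw [hs2]
    exact mul_mem (mul_mem (inv_mem (comm_mem_normalizer u_comm)) s_mem_normalizerN)
      (comm_mem_normalizer u_comm)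
  have hp2n : p2 ∈ Subgroup.normalizer (Ngrp' : Set (VB 3)) := by
    rw [hp2]
    exact mul_mem (comm_mem_normalizer u_comm) p_mem_normalizerN
  rcases x with i | i <;> fin_cases i
  · exact of_inl0 ▸ s_mem_normalizerN
  · exact of_inl1 ▸ hs2n
  · exact of_inr0 ▸ p_mem_normalizerN
  · exact of_inr1 ▸ hp2n

lemma M_le_N' : Mgrp ≤ Ngrp' := by
  refine Subgroup.normalClosure_le_normal ?_
  rintro _ ⟨m, rfl⟩
  exact ⟨⟨vf 3 m 0, hf m⟩, subset_normalClosure ⟨m, rfl⟩, rfl⟩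
end VBP


namespace VBP
open Subgroup SemidirectProduct Multiplicative

noncomputable def Φf : VBGen 3 → GG := fun x => Sum.elim (fun _ => Sg) (fun _ => Pg) x

lemma liftσ (i : ℕ) (h1 : 1 ≤ i) (h2 : i ≤ 2) : FreeGroup.lift Φf (fσ 3 i) = Sg := by
  rw [fσ, dif_pos (by omega)]
  simp [Φf]
lemma liftρ (i : ℕ) (h1 : 1 ≤ i) (h2 : i ≤ 2) : FreeGroup.lift Φf (fρ 3 i) = Pg := by
  rw [fρ, dif_pos (by omega)]
  simp [Φf]

lemma hrels : ∀ r ∈ vbRels 3, FreeGroup.lift Φf r = 1 := by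
  rintro r (( ⟨i, j, hi, hij, hj, hcase⟩ | ⟨i, hi, hi2, hcase⟩ ) | ⟨i, hi, hi2, rfl⟩)
  · omega
  · have hi1 : i = 1 := by omega
    subst hi1
    rcases hcase with rfl | rfl | rfl <;>
      simp only [map_mul, map_inv, liftσ 1 (by norm_num) (by norm_num),
        liftσ 2 (by norm_num) (by norm_num), liftρ 1 (by norm_num) (by norm_num),
        liftρ 2 (by norm_num) (by norm_num)]
    · group
    · group
    · rw [Pg_inv]
      calc Pg * Pg * Sg * Pg * Pg * Sg⁻¹ = Pg * Pg * Sg * (Pg * Pg) * Sg⁻¹ := by group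
        _ = 1 := by rw [Pg_sq]; group
  · rw [map_mul, liftρ i hi (by omega), Pg_sq]

noncomputable def Φ : VB 3 →* GG := PresentedGroup.toGroup hrels

lemma Φ_mk (x : FreeGroup (VBGen 3)) : Φ (PresentedGroup.mk (vbRels 3) x) = FreeGroup.lift Φf x := rfl

lemma Φs : Φ s = Sg := by rw [show (s : VB 3) = vσ 3 1 from rfl, vσ, Φ_mk, liftσ 1] <;> norm_num
lemma Φs2 : Φ s2 = Sg := by rw [show (s2 : VB 3) = vσ 3 2 from rfl, vσ, Φ_mk, liftσ 2] <;> norm_num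
lemma Φp : Φ p = Pg := by rw [show (p : VB 3) = vρ 3 1 from rfl, vρ, Φ_mk, liftρ 1] <;> norm_num
lemma Φp2 : Φ p2 = Pg := by rw [show (p2 : VB 3) = vρ 3 2 from rfl, vρ, Φ_mk, liftρ 2] <;> norm_num

lemma Φ_va (m : ℤ) : Φ (va 3 m) = inl (inl (FreeGroup.of m)) := by
  rw [va_eq, map_mul, map_mul, map_zpow, map_zpow, map_mul, map_mul, map_mul, map_inv,
    Φs, Φp, ← key_a m]
lemma Φ_vf (m : ℤ) : Φ (vf 3 m 0) = 1 := by
  rw [vf_eq, map_mul, map_mul, map_zpow, map_zpow, Φs, show (u : VB 3) = p2 * p from rfl,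
    map_mul, Φp, Φp2, Pg_sq, mul_one, ← zpow_add]
  simp
end VBP


namespace VBP
open Subgroup SemidirectProduct Multiplicative

lemma tR_right (l : RR) : (tR l).right = l.right := by
  have h : (rightHom : RR →* Multiplicative ℤ).comp tR = rightHom := by
    apply SemidirectProduct.hom_ext
    · apply FreeGroup.ext_hom
      intro m
      simp only [MonoidHom.comp_apply]
      rw [tR_inl]
      simp
    · apply MonoidHom.ext_mint
      simp only [MonoidHom.comp_apply]
      rw [tR_inr, Vr]
      simp
  have := DFunLike.congr_fun h l
  simpa using this
lemma actC_right (v : C2) (l : RR) : ((actC v) l).right = l.right := by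
  rcases C2_cases v with hv | hv <;> subst hv
  · rw [map_one]; rfl
  · rw [actC_apply]; exact tR_right l

noncomputable def ΨG : GG →* Multiplicative ℤ where
  toFun g := g.left.right
  map_one' := rfl
  map_mul' g h := by
    show (g * h).left.right = g.left.right * h.left.right
    rw [SemidirectProduct.mul_left, SemidirectProduct.mul_right, actC_right]

lemma hRight (x : ↥(commutator (VB 3))) : (Φ (x : VB 3)).right = 1 := by
  have h := Abelianization.commutator_subset_ker
    ((rightHom : GG →* C2).comp Φ) x.2
  simpa [MonoidHom.mem_ker] using h
lemma hMid (x : ↥(commutator (VB 3))) : (Φ (x : VB 3)).left.right = 1 := by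
  have h := Abelianization.commutator_subset_ker (ΨG.comp Φ) x.2
  simpa [MonoidHom.mem_ker, ΨG] using h

noncomputable def φC : ↥(commutator (VB 3)) →* FreeGroup ℤ where
  toFun x := (Φ (x : VB 3)).left.left
  map_one' := by simp
  map_mul' x y := by
    show (Φ ((x * y : ↥(commutator (VB 3))) : VB 3)).left.left
      = (Φ (x : VB 3)).left.left * (Φ (y : VB 3)).left.left
    have hcoe : ((x * y : ↥(commutator (VB 3))) : VB 3) = (x : VB 3) * (y : VB 3) := rfl
    rw [hcoe, map_mul, SemidirectProduct.mul_left, hRight, map_one, MulAut.one_apply,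
      SemidirectProduct.mul_left, hMid, map_one, MulAut.one_apply]

lemma φC_va (m : ℤ) (h : va 3 m ∈ commutator (VB 3)) :
    φC ⟨va 3 m, h⟩ = FreeGroup.of m := by
  show (Φ (va 3 m)).left.left = FreeGroup.of m
  rw [Φ_va]
  rfl
lemma φC_vf (m : ℤ) (h : vf 3 m 0 ∈ commutator (VB 3)) : φC ⟨vf 3 m 0, h⟩ = 1 := by
  show (Φ (vf 3 m 0)).left.left = 1
  rw [Φ_vf]
  rfl

noncomputable def ι : FreeGroup ℤ →* ↥(commutator (VB 3)) :=
  FreeGroup.lift (fun m => ⟨va 3 m, ha m⟩)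
lemma φC_ι (y : FreeGroup ℤ) : φC (ι y) = y := by
  have h : φC.comp ι = MonoidHom.id (FreeGroup ℤ) := by
    apply FreeGroup.ext_hom
    intro m
    simp only [MonoidHom.comp_apply, MonoidHom.id_apply]
    rw [ι, FreeGroup.lift_apply_of, φC_va]
  exact DFunLike.congr_fun h y

lemma N_le_ker : Ngrp ≤ φC.ker := by
  refine Subgroup.normalClosure_le_normal ?_
  rintro x ⟨m, hm⟩
  have : x = (⟨vf 3 m 0, hf m⟩ : ↥(commutator (VB 3))) := Subtype.ext hm
  rw [this]
  exact φC_vf m (hf m)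

lemma claimK : ∀ x : ↥(commutator (VB 3)), x * (ι (φC x))⁻¹ ∈ Ngrp := by
  have Tsub : ∀ x y : ↥(commutator (VB 3)), x * (ι (φC x))⁻¹ ∈ Ngrp → y * (ι (φC y))⁻¹ ∈ Ngrp →
      (x * y) * (ι (φC (x * y)))⁻¹ ∈ Ngrp := by
    intro x y hx hy
    have : (x * y) * (ι (φC (x * y)))⁻¹
        = (x * (y * (ι (φC y))⁻¹) * x⁻¹) * (x * (ι (φC x))⁻¹) := by
      rw [map_mul, map_mul]; group
    rw [this]
    exact mul_mem (N_normal.conj_mem _ hy _) hx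
  have Tinv : ∀ x : ↥(commutator (VB 3)), x * (ι (φC x))⁻¹ ∈ Ngrp →
      x⁻¹ * (ι (φC x⁻¹))⁻¹ ∈ Ngrp := by
    intro x hx
    have : x⁻¹ * (ι (φC x⁻¹))⁻¹ = x⁻¹ * (x * (ι (φC x))⁻¹)⁻¹ * (x⁻¹)⁻¹ := by
      rw [map_inv, map_inv]; group
    rw [this]
    exact N_normal.conj_mem _ (inv_mem hx) _
  intro x
  have hx : (x : VB 3) ∈ Subgroup.closure (Aset ∪ Mgrp) := commutator_le_C x.2
  revert x
  suffices h : ∀ g (hg : g ∈ Subgroup.closure (Aset ∪ (Mgrp : Set (VB 3)))),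
      ∀ hc : g ∈ commutator (VB 3),
      (⟨g, hc⟩ : ↥(commutator (VB 3))) * (ι (φC ⟨g, hc⟩))⁻¹ ∈ Ngrp by
    intro x hx
    have := h (x : VB 3) hx x.2
    simpa using this
  intro g hg
  refine Subgroup.closure_induction ?_ ?_ ?_ ?_ hg
  · rintro x (⟨m, rfl⟩ | hx)
    · intro hc
      rw [φC_va m hc, show ι (FreeGroup.of m) = ⟨va 3 m, ha m⟩ from FreeGroup.lift_apply_of]
      rw [show (⟨va 3 m, hc⟩ : ↥(commutator (VB 3))) = ⟨va 3 m, ha m⟩ from rfl]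
      simp only [mul_inv_cancel]
      exact one_mem _
    · intro hc
      have hxN : (⟨x, hc⟩ : ↥(commutator (VB 3))) ∈ Ngrp := by
        obtain ⟨x₀, hx₀, hval⟩ := M_le_N' hx
        rwa [show (⟨x, hc⟩ : ↥(commutator (VB 3))) = x₀ from Subtype.ext hval.symm]
      have hker : φC ⟨x, hc⟩ = 1 := N_le_ker hxN
      rw [hker, map_one, inv_one, mul_one]
      exact hxN
  · intro hc
    rw [show (⟨(1 : VB 3), hc⟩ : ↥(commutator (VB 3))) = 1 from rfl]
    simpa using one_mem Ngrp
  · intro x y hxc hyc ihx ihy hc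
    have hx' := ihx (C_le_commutator hxc)
    have hy' := ihy (C_le_commutator hyc)
    have heq : (⟨x * y, hc⟩ : ↥(commutator (VB 3)))
        = (⟨x, C_le_commutator hxc⟩ : ↥(commutator (VB 3))) * ⟨y, C_le_commutator hyc⟩ :=
      Subtype.ext rfl
    rw [heq]
    exact Tsub _ _ hx' hy'
  · intro x hxc ihx hc
    have hx' := ihx (C_le_commutator hxc)
    have heq : (⟨x⁻¹, hc⟩ : ↥(commutator (VB 3)))
        = (⟨x, C_le_commutator hxc⟩ : ↥(commutator (VB 3)))⁻¹ := Subtype.ext rfl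
    rw [heq]
    exact Tinv _ hx'
end VBP


/-- There is a surjection `φ : VB_3' → FreeGroup ℤ` with `φ(a_m)`
the free generator indexed by `m`, whose kernel is the normal closure in `VB_3'`
of `{f_m : m ∈ ℤ}`. -/
theorem VB3_commutator_surjects_free :
    ∃ ha : ∀ m : ℤ, va 3 m ∈ commutator (VB 3),
    ∃ φ : ↥(commutator (VB 3)) →* FreeGroup ℤ,
      Function.Surjective φ ∧
      (∀ m : ℤ, φ ⟨va 3 m, ha m⟩ = FreeGroup.of m) ∧
      φ.ker = Subgroup.normalClosure
        {x : ↥(commutator (VB 3)) | ∃ m : ℤ, (x : VB 3) = vf 3 m 0} := by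
  refine ⟨VBP.ha, VBP.φC, ?_, ?_, ?_⟩
  · intro y
    exact ⟨VBP.ι y, VBP.φC_ι y⟩
  · intro m
    exact VBP.φC_va m (VBP.ha m)
  · apply le_antisymm
    · intro x hx
      have h1 := VBP.claimK x
      rw [MonoidHom.mem_ker.mp hx, map_one, inv_one, mul_one] at h1
      exact h1
    · exact VBP.N_le_ker
end
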